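/- arXiv:2401.10142 — 6 statements merged into one kernel-verified Lean document; each statement's English description precedes it below -/
import Mathlib

section
/- For every unit vector ψ ∈ ℂ^d, the revival fidelity satisfies F_R(ψ) = 1 if and only if either ψ is a scalar multiple of ψ_i for some i ∈ ℬ, or ψ lies in the linear span of {ψ_i : i ∈ 𝒜}. (In the paper's terminology: the set of free pure states is 𝒮_F = S_Irr ⊔ L_Rat.) -/
open Matrix Complex

noncomputable section

/-- Time-evolution unitary `U(t) = exp(-i t H)`. -/
def Uevol {d : ℕ} (H : Matrix (Fin d) (Fin d) ℂ) (t : ℝ) : Matrix (Fin d) (Fin d) ℂ :=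
  NormedSpace.exp ((-(Complex.I * (t : ℂ))) • H)

/-- Revival fidelity `F_R(ψ) = |⟨ψ, U(2πT)ψ⟩|`. -/
def FR {d : ℕ} (H : Matrix (Fin d) (Fin d) ℂ) (T : ℕ) (x : Fin d → ℂ) : ℝ :=
  ‖star x ⬝ᵥ (Uevol H (2 * Real.pi * T) *ᵥ x)‖

/-- A free pure state: a unit vector with perfect revival. -/
def IsFreeState {d : ℕ} (H : Matrix (Fin d) (Fin d) ℂ) (T : ℕ) (x : Fin d → ℂ) : Prop :=
  star x ⬝ᵥ x = 1 ∧ FR H T x = 1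

/-- A free unitary: a unitary matrix mapping every free pure state to a free pure state. -/
def IsFreeUnitary {d : ℕ} (H : Matrix (Fin d) (Fin d) ℂ) (T : ℕ)
    (V : Matrix (Fin d) (Fin d) ℂ) : Prop :=
  V ∈ Matrix.unitaryGroup (Fin d) ℂ ∧
    ∀ x : Fin d → ℂ, IsFreeState H T x → IsFreeState H T (V *ᵥ x)

/-- Exponential of a matrix acting on an eigenvector. -/
lemma exp_mulVec_eigen {d : ℕ} (M : Matrix (Fin d) (Fin d) ℂ) (v : Fin d → ℂ) (μ : ℂ)
    (h : M *ᵥ v = μ • v) :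
    (NormedSpace.exp M) *ᵥ v = Complex.exp μ • v := by
  letI : SeminormedRing (Matrix (Fin d) (Fin d) ℂ) := Matrix.linftyOpSemiNormedRing
  letI : NormedRing (Matrix (Fin d) (Fin d) ℂ) := Matrix.linftyOpNormedRing
  letI : NormedAlgebra ℂ (Matrix (Fin d) (Fin d) ℂ) := Matrix.linftyOpNormedAlgebra
  have hpow : ∀ n : ℕ, M ^ n *ᵥ v = μ ^ n • v := by
    intro n
    induction n with
    | zero => simp
    | succ n ih =>
      rw [pow_succ, ← Matrix.mulVec_mulVec, h, Matrix.mulVec_smul, ih, pow_succ]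
      rw [smul_smul, mul_comm]
  have hL : ∃ L : Matrix (Fin d) (Fin d) ℂ →L[ℂ] (Fin d → ℂ),
      ∀ N, L N = N *ᵥ v := by
    refine ⟨LinearMap.toContinuousLinearMap
      { toFun := fun N => N *ᵥ v
        map_add' := fun N₁ N₂ => Matrix.add_mulVec N₁ N₂ v
        map_smul' := fun a N => Matrix.smul_mulVec a N v }, fun N => rfl⟩
  obtain ⟨L, hLdef⟩ := hL
  have hs : Summable (fun n : ℕ => ((n.factorial : ℂ))⁻¹ • M ^ n) :=
    NormedSpace.expSeries_summable' (𝕂 := ℂ) M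
  have hsμ : Summable (fun n : ℕ => ((n.factorial : ℂ))⁻¹ • μ ^ n) :=
    NormedSpace.expSeries_summable' (𝕂 := ℂ) μ
  have h1 : (NormedSpace.exp M) *ᵥ v = L (NormedSpace.exp M) := (hLdef _).symm
  rw [h1, NormedSpace.exp_eq_tsum ℂ, L.map_tsum hs]
  have h2 : ∀ n : ℕ, L (((n.factorial : ℂ))⁻¹ • M ^ n) = (((n.factorial : ℂ))⁻¹ • μ ^ n) • v := by
    intro n
    rw [_root_.map_smul, hLdef, hpow, smul_smul, smul_eq_mul]
  simp_rw [h2]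
  rw [hsμ.tsum_smul_const]
  congr 1
  rw [Complex.exp_eq_exp_ℂ, NormedSpace.exp_eq_tsum ℂ]

/-- Equality case of the triangle inequality for convex combinations of unimodular numbers. -/
lemma eq_of_abs_convex_sum_eq_one {ι : Type*} [Fintype ι] (w : ι → ℝ) (z : ι → ℂ)
    (hw : ∀ i, 0 ≤ w i) (hw1 : ∑ i, w i = 1) (hz : ∀ i, ‖z i‖ = 1)
    (h : ‖∑ i, (w i : ℂ) * z i‖ = 1) :
    ∀ i, w i ≠ 0 → z i = ∑ j, (w j : ℂ) * z j := by
  set S : ℂ := ∑ j, (w j : ℂ) * z j with hS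
  have hSnormSq : Complex.normSq S = 1 := by
    rw [← Complex.sq_norm, h, one_pow]
  have hSconj : (starRingEnd ℂ) S * S = 1 := by
    rw [mul_comm, Complex.mul_conj, hSnormSq, Complex.ofReal_one]
  have hre1 : ∑ i, w i * ((starRingEnd ℂ) S * z i).re = 1 := by
    have e1 : ∑ i, w i * ((starRingEnd ℂ) S * z i).re
        = (∑ i, ((w i : ℝ) : ℂ) * ((starRingEnd ℂ) S * z i)).re := by
      rw [Complex.re_sum]
      exact Finset.sum_congr rfl fun i _ => (Complex.re_ofReal_mul _ _).symm
    rw [e1]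
    have e2 : ∑ i, ((w i : ℝ) : ℂ) * ((starRingEnd ℂ) S * z i)
        = (starRingEnd ℂ) S * ∑ i, (w i : ℂ) * z i := by
      rw [Finset.mul_sum]
      exact Finset.sum_congr rfl fun i _ => by ring
    rw [e2, ← hS, hSconj, Complex.one_re]
  have hterm : ∀ i ∈ Finset.univ, 0 ≤ w i * (1 - ((starRingEnd ℂ) S * z i).re) := by
    intro i _
    apply mul_nonneg (hw i)
    have : ((starRingEnd ℂ) S * z i).re ≤ ‖(starRingEnd ℂ) S * z i‖ :=
      Complex.re_le_norm _
    rw [norm_mul, Complex.norm_conj, h, hz i, one_mul] at this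
    linarith
  have hsum0 : ∑ i, w i * (1 - ((starRingEnd ℂ) S * z i).re) = 0 := by
    have : ∑ i, w i * (1 - ((starRingEnd ℂ) S * z i).re)
        = (∑ i, w i) - ∑ i, w i * ((starRingEnd ℂ) S * z i).re := by
      rw [← Finset.sum_sub_distrib]
      exact Finset.sum_congr rfl fun i _ => by ring
    rw [this, hw1, hre1, sub_self]
  have hzero := (Finset.sum_eq_zero_iff_of_nonneg hterm).mp hsum0
  intro i hi
  have h0 := hzero i (Finset.mem_univ i)
  have hrei : ((starRingEnd ℂ) S * z i).re = 1 := by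
    rcases mul_eq_zero.mp h0 with h' | h'
    · exact absurd h' hi
    · linarith
  have habsu : ‖(starRingEnd ℂ) S * z i‖ = 1 := by
    rw [norm_mul, Complex.norm_conj, h, hz i, one_mul]
  have himu : ((starRingEnd ℂ) S * z i).im = 0 := by
    have hns : Complex.normSq ((starRingEnd ℂ) S * z i) = 1 := by
      rw [← Complex.sq_norm, habsu, one_pow]
    rw [Complex.normSq_apply, hrei] at hns
    nlinarith [sq_nonneg (((starRingEnd ℂ) S * z i).im)]
  have hu1 : (starRingEnd ℂ) S * z i = 1 := by
    apply Complex.ext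
    · rw [hrei, Complex.one_re]
    · rw [himu, Complex.one_im]
  have hSne : (starRingEnd ℂ) S ≠ 0 := by
    intro h'
    rw [h', zero_mul] at hSconj
    exact zero_ne_one hSconj
  have := hu1.trans hSconj.symm
  exact mul_left_cancel₀ hSne this

/-- `u ⬝ᵥ ∑ = ∑ u ⬝ᵥ`. -/
lemma dotProduct_finset_sum {d : ℕ} {ι : Type*} (s : Finset ι) (u : Fin d → ℂ)
    (w : ι → Fin d → ℂ) : u ⬝ᵥ (∑ j ∈ s, w j) = ∑ j ∈ s, u ⬝ᵥ w j := by
  simp only [dotProduct, Finset.sum_apply, Finset.mul_sum]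
  rw [Finset.sum_comm]

lemma mulVec_finset_sum {d : ℕ} {ι : Type*} (s : Finset ι) (M : Matrix (Fin d) (Fin d) ℂ)
    (w : ι → Fin d → ℂ) : M *ᵥ (∑ j ∈ s, w j) = ∑ j ∈ s, M *ᵥ w j := by
  funext i
  simp only [Matrix.mulVec, dotProduct, Finset.sum_apply, Finset.mul_sum]
  rw [Finset.sum_comm]

theorem free_pure_states_characterization
    (d : ℕ) (hd : 2 ≤ d)
    (H : Matrix (Fin d) (Fin d) ℂ) (hH : H.IsHermitian)
    (ψ : Fin d → Fin d → ℂ) (E : Fin d → ℝ)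
    (horth : ∀ i j : Fin d, star (ψ i) ⬝ᵥ ψ j = if i = j then 1 else 0)
    (heig : ∀ i : Fin d, H *ᵥ ψ i = (E i : ℂ) • ψ i)
    (T : ℕ) (hT : 0 < T)
    (A B : Finset (Fin d))
    (hdisj : Disjoint A B) (hcover : A ∪ B = Finset.univ)
    (hArat : ∀ i ∈ A, ∃ m : ℤ, E i * (T : ℝ) = (m : ℝ))
    (hBirr : ∀ i ∈ B, Irrational (E i))
    (hBdiff : ∀ i ∈ B, ∀ j ∈ B, i ≠ j → Irrational (E i - E j))
    (hAcard : 1 < A.card) (hBcard : 1 < B.card)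
    (x : Fin d → ℂ) (hx : star x ⬝ᵥ x = 1) :
    FR H T x = 1 ↔
      ((∃ i ∈ B, ∃ c : ℂ, x = c • ψ i) ∨
        x ∈ Submodule.span ℂ (ψ '' (A : Set (Fin d)))) := by
  classical
  set t : ℝ := 2 * Real.pi * T with ht
  set z : Fin d → ℂ := fun k => Complex.exp ((-(Complex.I * (t : ℂ))) * (E k : ℂ)) with hz
  -- eigenvectors of the evolution
  have hU : ∀ k, Uevol H t *ᵥ ψ k = z k • ψ k := by
    intro k
    apply exp_mulVec_eigen
    rw [Matrix.smul_mulVec, heig k, smul_smul]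
  have habs_z : ∀ k, ‖z k‖ = 1 := by
    intro k
    have e : (-(Complex.I * (t : ℂ))) * (E k : ℂ) = ((-(t * E k) : ℝ) : ℂ) * Complex.I := by
      push_cast; ring
    rw [hz]
    simp only
    rw [e, Complex.norm_exp_ofReal_mul_I]
  have hzA : ∀ k ∈ A, z k = 1 := by
    intro k hk
    obtain ⟨m, hm⟩ := hArat k hk
    have hm' : (E k : ℂ) * (T : ℂ) = (m : ℂ) := by exact_mod_cast congrArg Complex.ofReal hm
    rw [hz]
    simp only
    rw [Complex.exp_eq_one_iff]
    refine ⟨-m, ?_⟩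
    rw [ht]
    push_cast
    rw [← hm']
    ring
  -- helper converting the exponent equation to a real statement
  have hkey : ∀ r : ℝ, ∀ n : ℤ,
      (-(Complex.I * (t : ℂ))) * (r : ℂ) = (n : ℂ) * (2 * Real.pi * Complex.I) →
      (T : ℝ) * r = ((-n : ℤ) : ℝ) := by
    intro r n hn
    have h3 : ((-(t * r) : ℝ) : ℂ) = (((n : ℝ) * (2 * Real.pi) : ℝ) : ℂ) := by
      apply mul_right_cancel₀ Complex.I_ne_zero
      push_cast
      push_cast at hn
      linear_combination hn
    have h2 : (-(t * r) : ℝ) = (n : ℝ) * (2 * Real.pi) := by exact_mod_cast h3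
    rw [ht] at h2
    have h4 : (2 * Real.pi) * ((T : ℝ) * r) = (2 * Real.pi) * (-(n : ℝ)) := by
      linear_combination -h2
    have h5 := mul_left_cancel₀ (by positivity : (2 * Real.pi : ℝ) ≠ 0) h4
    rw [h5]; push_cast; ring
  have hzB : ∀ k ∈ B, z k ≠ 1 := by
    intro k hk h1
    rw [hz] at h1
    simp only at h1
    rw [Complex.exp_eq_one_iff] at h1
    obtain ⟨n, hn⟩ := h1
    have hTirr : Irrational ((T : ℝ) * E k) := (hBirr k hk).natCast_mul hT.ne'
    exact hTirr.ne_int (-n) (hkey (E k) n hn)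
  have hzBB : ∀ j ∈ B, ∀ k ∈ B, j ≠ k → z j ≠ z k := by
    intro j hj k hk hjk h1
    rw [hz] at h1
    simp only at h1
    rw [Complex.exp_eq_exp_iff_exists_int] at h1
    obtain ⟨n, hn⟩ := h1
    have hTirr : Irrational ((T : ℝ) * (E j - E k)) :=
      ((hBdiff j hj k hk hjk).natCast_mul hT.ne')
    apply hTirr.ne_int (-n)
    have hn' : (-(Complex.I * (t : ℂ))) * ((E j - E k : ℝ) : ℂ)
        = (n : ℂ) * (2 * Real.pi * Complex.I) := by
      push_cast
      push_cast at hn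
      linear_combination hn
    exact hkey (E j - E k) n hn'
  -- coefficients of x in the eigenbasis
  set c : Fin d → ℂ := fun j => star (ψ j) ⬝ᵥ x with hc
  set Q : Matrix (Fin d) (Fin d) ℂ := Matrix.of fun i j => ψ j i with hQ
  have hQ1 : Qᴴ * Q = 1 := by
    ext i j
    have h := horth i j
    simp only [Matrix.mul_apply, Matrix.conjTranspose_apply, Matrix.of_apply, Matrix.one_apply, hQ]
    simpa [dotProduct] using h
  have hQ2 : Q * Qᴴ = 1 := mul_eq_one_comm.mp hQ1
  have hxexp : x = ∑ j, c j • ψ j := by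
    have h1 : Q *ᵥ (Qᴴ *ᵥ x) = x := by
      rw [Matrix.mulVec_mulVec, hQ2, Matrix.one_mulVec]
    funext i
    rw [← h1]
    simp only [Matrix.mulVec, dotProduct, Matrix.conjTranspose_apply, Matrix.of_apply,
      Finset.sum_apply, Pi.smul_apply, smul_eq_mul, hQ, hc]
    refine Finset.sum_congr rfl fun j _ => ?_
    simp [dotProduct, mul_comm]
  -- conjugate coefficients
  have hdot : ∀ j, star x ⬝ᵥ ψ j = (starRingEnd ℂ) (c j) := by
    intro j
    simp only [hc, dotProduct, map_sum, _root_.map_mul, Pi.star_apply, RCLike.star_def,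
      Complex.conj_conj]
    exact Finset.sum_congr rfl fun k _ => by ring
  -- the amplitude
  have hS : star x ⬝ᵥ (Uevol H t *ᵥ x) = ∑ j, (Complex.normSq (c j) : ℂ) * z j := by
    have hUx : Uevol H t *ᵥ x = ∑ j, (c j * z j) • ψ j := by
      conv_lhs => rw [hxexp]
      rw [mulVec_finset_sum]
      refine Finset.sum_congr rfl fun j _ => ?_
      rw [Matrix.mulVec_smul, hU j, smul_smul]
    rw [hUx, dotProduct_finset_sum]
    refine Finset.sum_congr rfl fun j _ => ?_
    rw [dotProduct_smul, hdot j, smul_eq_mul]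
    rw [show c j * z j * (starRingEnd ℂ) (c j) = (c j * (starRingEnd ℂ) (c j)) * z j by ring,
      Complex.mul_conj]
  -- normalization
  have hnorm : ∑ j, Complex.normSq (c j) = 1 := by
    have h1 : star x ⬝ᵥ x = ∑ j, (Complex.normSq (c j) : ℂ) := by
      nth_rewrite 2 [hxexp]
      rw [dotProduct_finset_sum]
      refine Finset.sum_congr rfl fun j _ => ?_
      rw [dotProduct_smul, hdot j, smul_eq_mul, Complex.mul_conj]
    rw [hx] at h1
    exact_mod_cast h1.symm
  have hFReq : FR H T x = ‖∑ j, (Complex.normSq (c j) : ℂ) * z j‖ := by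
    rw [← hS]; rfl
  constructor
  · -- forward direction
    intro hFR
    rw [hFReq] at hFR
    have hall := eq_of_abs_convex_sum_eq_one (fun j => Complex.normSq (c j)) z
      (fun j => Complex.normSq_nonneg _) hnorm habs_z hFR
    by_cases hB0 : ∃ k ∈ B, c k ≠ 0
    · obtain ⟨k, hkB, hck⟩ := hB0
      left
      refine ⟨k, hkB, c k, ?_⟩
      rw [hxexp, Finset.sum_eq_single k]
      · intro j _ hjk
        suffices hcj : c j = 0 by simp [hcj]
        by_contra hcj
        have hzj : z j = z k := by
          rw [hall j (fun h => hcj (Complex.normSq_eq_zero.mp h)),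
            hall k (fun h => hck (Complex.normSq_eq_zero.mp h))]
        have hjAB : j ∈ A ∨ j ∈ B := by
          have : j ∈ A ∪ B := hcover ▸ Finset.mem_univ j
          exact Finset.mem_union.mp this
        rcases hjAB with hjA | hjB
        · exact hzB k hkB (by rw [← hzj, hzA j hjA])
        · exact hzBB j hjB k hkB hjk hzj
      · intro h; exact absurd (Finset.mem_univ k) h
    · right
      push_neg at hB0
      rw [hxexp]
      apply Submodule.sum_mem
      intro j _
      by_cases hjA : j ∈ A
      · exact Submodule.smul_mem _ _ (Submodule.subset_span ⟨j, hjA, rfl⟩)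
      · have hjB : j ∈ B := by
          have : j ∈ A ∪ B := hcover ▸ Finset.mem_univ j
          rcases Finset.mem_union.mp this with h' | h'
          · exact absurd h' hjA
          · exact h'
        rw [hB0 j hjB]
        simp
  · -- backward direction
    intro hcase
    rcases hcase with ⟨i, hiB, a, hxa⟩ | hspan
    · -- scalar multiple of an eigenvector in B
      have hcj : ∀ j, j ≠ i → c j = 0 := by
        intro j hj
        rw [hc]
        simp only [hxa, dotProduct_smul, horth j i, if_neg hj, smul_eq_mul, mul_zero]
      have hSval : ∑ j, (Complex.normSq (c j) : ℂ) * z j = (Complex.normSq (c i) : ℂ) * z i := by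
        rw [Finset.sum_eq_single i]
        · intro j _ hji; rw [hcj j hji]; simp
        · intro h; exact absurd (Finset.mem_univ i) h
      have hni : Complex.normSq (c i) = 1 := by
        rw [← hnorm, Finset.sum_eq_single i]
        · intro j _ hji; rw [hcj j hji]; simp
        · intro h; exact absurd (Finset.mem_univ i) h
      rw [hFReq, hSval, hni]
      simp [habs_z i]
    · -- in the span of the A-eigenvectors
      have hcB : ∀ k ∈ B, c k = 0 := by
        intro k hk
        have hne : ∀ j ∈ A, star (ψ k) ⬝ᵥ ψ j = 0 := by
          intro j hj
          have : k ≠ j := fun h => (Finset.disjoint_left.mp hdisj (h ▸ hj)) hk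
          rw [horth k j, if_neg this]
        have hall : ∀ y ∈ Submodule.span ℂ (ψ '' (A : Set (Fin d))),
            star (ψ k) ⬝ᵥ y = 0 := by
          intro y hy
          induction hy using Submodule.span_induction with
          | mem y hy =>
            obtain ⟨j, hj, rfl⟩ := hy
            exact hne j hj
          | zero => simp [dotProduct]
          | add y₁ y₂ _ _ ih1 ih2 => rw [dotProduct_add, ih1, ih2, add_zero]
          | smul a y _ ih => rw [dotProduct_smul, ih, smul_zero]
        simp only [hc]
        exact hall x hspan
      have hSval : ∑ j, (Complex.normSq (c j) : ℂ) * z j = ∑ j, (Complex.normSq (c j) : ℂ) := by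
        refine Finset.sum_congr rfl fun j _ => ?_
        by_cases hjA : j ∈ A
        · rw [hzA j hjA, mul_one]
        · have hjB : j ∈ B := by
            have : j ∈ A ∪ B := hcover ▸ Finset.mem_univ j
            rcases Finset.mem_union.mp this with h' | h'
            · exact absurd h' hjA
            · exact h'
          rw [hcB j hjB]
          simp
      rw [hFReq, hSval]
      rw [show (∑ j, (Complex.normSq (c j) : ℂ)) = ((∑ j, Complex.normSq (c j) : ℝ) : ℂ) by
        push_cast; rfl]
      rw [hnorm]
      simp
end
end

section
/- For every density matrix ρ on ℂ^d, the mixed-state revival fidelity satisfies F_{R,M}(ρ) = 1 if and only if ⟨ψ_i, ρ ψ_j⟩ = 0 for every pair of distinct indices i, j ∈ I with i ∈ ℬ or j ∈ ℬ; equivalently, ρ = Σ_{i,j∈𝒜} a_{i,j}·ψ_i ψ_j* + Σ_{i∈ℬ} a_{i,i}·ψ_i ψ_i* for some coefficients a_{i,j}. -/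
open Matrix Complex
open scoped ComplexOrder

noncomputable section

open Classical in
/-- Positive semidefinite square root (junk value `0` off the PSD cone). -/
def psdSqrt {d : ℕ} (M : Matrix (Fin d) (Fin d) ℂ) : Matrix (Fin d) (Fin d) ℂ :=
  if h : M.PosSemidef then
    (h.1.eigenvectorUnitary : Matrix (Fin d) (Fin d) ℂ) *
      diagonal ((↑) ∘ (√·) ∘ h.1.eigenvalues) *
      (star h.1.eigenvectorUnitary : Matrix (Fin d) (Fin d) ℂ) else 0

/-- Mixed-state revival fidelity `F_{R,M}(ρ) = tr √(√ρ · U(2πT) ρ U(2πT)* · √ρ)`. -/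
def FRM {d : ℕ} (H : Matrix (Fin d) (Fin d) ℂ) (T : ℕ) (ρ : Matrix (Fin d) (Fin d) ℂ) : ℂ :=
  (psdSqrt (psdSqrt ρ *
    (Uevol H (2 * Real.pi * T) * ρ * (Uevol H (2 * Real.pi * T))ᴴ) * psdSqrt ρ)).trace

/-- A free density matrix: a density matrix with mixed-state revival fidelity one. -/
def IsFreeDM {d : ℕ} (H : Matrix (Fin d) (Fin d) ℂ) (T : ℕ)
    (ρ : Matrix (Fin d) (Fin d) ℂ) : Prop :=
  ρ.PosSemidef ∧ ρ.trace = 1 ∧ FRM H T ρ = 1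

namespace FreeDM

section sqrtAux
open scoped MatrixOrder

lemma psdSqrt_eq {d : ℕ} {M : Matrix (Fin d) (Fin d) ℂ} (h : M.PosSemidef) :
    psdSqrt M = CFC.sqrt M := by
  rw [psdSqrt, dif_pos h, CFC.sqrt_eq_cfc, cfc_nnreal_eq_real _ M h.nonneg, h.1.cfc_eq]
  simp only [IsHermitian.cfc, Unitary.conjStarAlgAut_apply, Real.coe_sqrt, Real.coe_toNNReal']
  congr 3
  funext k
  simp [h.eigenvalues_nonneg k]

lemma psdSqrt_psd {d : ℕ} {M : Matrix (Fin d) (Fin d) ℂ} (h : M.PosSemidef) :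
    (psdSqrt M).PosSemidef := by
  rw [psdSqrt_eq h]; exact (CFC.sqrt_nonneg M).posSemidef

lemma psdSqrt_mul_self {d : ℕ} {M : Matrix (Fin d) (Fin d) ℂ} (h : M.PosSemidef) :
    psdSqrt M * psdSqrt M = M := by
  rw [psdSqrt_eq h]; exact CFC.sqrt_mul_sqrt_self M h.nonneg

lemma psdSqrt_sq {d : ℕ} {M : Matrix (Fin d) (Fin d) ℂ} (h : M.PosSemidef) :
    psdSqrt (M ^ 2) = M := by
  rw [psdSqrt_eq (h.pow 2)]; exact CFC.sqrt_sq M h.nonneg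

end sqrtAux

variable {n : Type*} [Fintype n] [DecidableEq n]

lemma dp_shift (M : Matrix n n ℂ) (x y : n → ℂ) :
    star (Mᴴ *ᵥ x) ⬝ᵥ y = star x ⬝ᵥ (M *ᵥ y) := by
  rw [star_mulVec, conjTranspose_conjTranspose, dotProduct_mulVec]

lemma dp_herm (M : Matrix n n ℂ) (hM : Mᴴ = M) (x y : n → ℂ) :
    star (M *ᵥ x) ⬝ᵥ y = star x ⬝ᵥ (M *ᵥ y) := by
  conv_lhs => rw [← hM]
  rw [dp_shift]

lemma mul_vecMulVec_mul (M N : Matrix n n ℂ) (x y : n → ℂ) :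
    M * vecMulVec x y * N = vecMulVec (M *ᵥ x) (y ᵥ* N) := by
  ext i j
  simp only [mul_apply, vecMulVec_apply, mulVec, vecMul, dotProduct,
    Finset.sum_mul, Finset.mul_sum]
  apply Finset.sum_congr rfl; intro q _
  apply Finset.sum_congr rfl; intro p _
  ring

lemma vecMulVec_mul_vecMulVec (x y z w : n → ℂ) :
    vecMulVec x y * vecMulVec z w = (y ⬝ᵥ z) • vecMulVec x w := by
  ext i j
  simp only [mul_apply, vecMulVec_apply, Matrix.smul_apply, dotProduct, smul_eq_mul,
    Finset.sum_mul, Finset.mul_sum]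
  apply Finset.sum_congr rfl; intro q _
  ring

lemma trace_vecMulVec (x y : n → ℂ) : (vecMulVec x y).trace = y ⬝ᵥ x := by
  simp only [trace, diag, vecMulVec_apply, dotProduct]
  apply Finset.sum_congr rfl; intro q _
  ring

lemma conjTranspose_vecMulVec_star (x : n → ℂ) :
    (vecMulVec x (star x))ᴴ = vecMulVec x (star x) := by
  ext i j
  simp only [conjTranspose_apply, vecMulVec_apply, Pi.star_apply, star_mul', star_star]
  exact mul_comm _ _

lemma sum_outer_cols (V : Matrix n n ℂ) :
    ∑ k, vecMulVec (fun i => V i k) (star fun i => V i k) = V * Vᴴ := by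
  ext i j
  simp only [Matrix.sum_apply, vecMulVec_apply, mul_apply, conjTranspose_apply, Pi.star_apply]

lemma sum_col_dp (M V : Matrix n n ℂ) (hV : V * Vᴴ = 1) :
    ∑ k, star (fun i => V i k) ⬝ᵥ (M *ᵥ fun i => V i k) = M.trace := by
  have h : M.trace = (M * (V * Vᴴ)).trace := by rw [hV, mul_one]
  rw [h, ← mul_assoc, trace_mul_comm]
  simp only [trace, diag, mul_apply, dotProduct, mulVec, conjTranspose_apply, Pi.star_apply]

lemma trace_cts_nonneg (Y : Matrix n n ℂ) : 0 ≤ (Yᴴ * Y).trace := by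
  have : (Yᴴ * Y).trace = ∑ j, star (fun i => Y i j) ⬝ᵥ (fun i => Y i j) := by
    simp only [trace, diag, mul_apply, conjTranspose_apply, dotProduct, Pi.star_apply]
  rw [this]
  exact Finset.sum_nonneg fun j _ => dotProduct_star_self_nonneg _

lemma trace_cts_eq_zero {Y : Matrix n n ℂ} (h : (Yᴴ * Y).trace = 0) : Y = 0 := by
  have he : (Yᴴ * Y).trace = ∑ j, star (fun i => Y i j) ⬝ᵥ (fun i => Y i j) := by
    simp only [trace, diag, mul_apply, conjTranspose_apply, dotProduct, Pi.star_apply]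
  rw [he] at h
  have hz := (Finset.sum_eq_zero_iff_of_nonneg
    (fun j _ => dotProduct_star_self_nonneg (fun i => Y i j))).mp h
  ext i j
  have := dotProduct_star_self_eq_zero.mp (hz j (Finset.mem_univ j))
  exact congrFun this i

/-- the key Fuchs-type rigidity: fidelity one forces equality -/
lemma fidelity_eq_one {d : ℕ} {ρ σ : Matrix (Fin d) (Fin d) ℂ}
    (hρ : ρ.PosSemidef) (hσ : σ.PosSemidef) (hρt : ρ.trace = 1) (hσt : σ.trace = 1)
    (h : (psdSqrt (psdSqrt ρ * σ * psdSqrt ρ)).trace = 1) : ρ = σ := by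
  classical
  -- square roots
  set P : Matrix (Fin d) (Fin d) ℂ := psdSqrt ρ with hPdef'
  have hPdef : P = psdSqrt ρ := hPdef'
  have hPpsd : P.PosSemidef := hPdef ▸ psdSqrt_psd hρ
  have hPH : Pᴴ = P := hPpsd.1
  have hPP : P * P = ρ := hPdef ▸ psdSqrt_mul_self hρ
  set B : Matrix (Fin d) (Fin d) ℂ := psdSqrt σ with hBdef
  have hBpsd : B.PosSemidef := psdSqrt_psd hσ
  have hBH : Bᴴ = B := hBpsd.1
  have hBB : B * B = σ := psdSqrt_mul_self hσ
  set X : Matrix (Fin d) (Fin d) ℂ := P * B with hXdef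
  set M : Matrix (Fin d) (Fin d) ℂ := P * σ * P with hMdef
  have hM : M.PosSemidef := by
    have := hσ.mul_mul_conjTranspose_same P
    rwa [hPH] at this
  have hMX : M = X * Xᴴ := by
    rw [hMdef, hXdef, conjTranspose_mul, hPH, hBH, ← hBB]
    noncomm_ring
  set C : Matrix (Fin d) (Fin d) ℂ := psdSqrt M with hCdef'
  have hCdef : C = psdSqrt M := hCdef'
  have hCpsd : C.PosSemidef := hCdef ▸ psdSqrt_psd hM
  have hCC : C * C = M := hCdef ▸ psdSqrt_mul_self hM
  have hCh : C.IsHermitian := hCpsd.1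
  set V : Matrix (Fin d) (Fin d) ℂ := (hCh.eigenvectorUnitary : Matrix (Fin d) (Fin d) ℂ)
    with hVdef
  set c : Fin d → ℝ := hCh.eigenvalues with hcdef
  have hc0 : ∀ k, 0 ≤ c k := hCpsd.eigenvalues_nonneg
  have hspec : C = V * diagonal (fun k => (c k : ℂ)) * Vᴴ := by
    have := hCh.spectral_theorem
    rw [Unitary.conjStarAlgAut_apply, Matrix.star_eq_conjTranspose] at this
    convert this using 3
    all_goals rfl
  have hV1 : Vᴴ * V = 1 := by
    have := hCh.eigenvectorUnitary.2
    rw [Matrix.mem_unitaryGroup_iff'] at this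
    rw [← Matrix.star_eq_conjTranspose]
    exact this
  have hV2 : V * Vᴴ = 1 := by
    rw [← Matrix.star_eq_conjTranspose]
    exact Matrix.mem_unitaryGroup_iff.mp hCh.eigenvectorUnitary.2
  set u : Fin d → Fin d → ℂ := fun k i => V i k with hudef
  have hCu : ∀ k, C *ᵥ u k = (c k : ℂ) • u k := by
    intro k
    have h1 : C * V = V * diagonal (fun k => (c k : ℂ)) := by
      rw [hspec, mul_assoc, mul_assoc, hV1, mul_one]
    funext i
    have h2 : (C * V) i k = V i k * (c k : ℂ) := by rw [h1, mul_diagonal]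
    have h3 : (C *ᵥ u k) i = (C * V) i k := by
      simp only [mulVec, dotProduct, mul_apply, hudef]
    rw [h3, h2, Pi.smul_apply, smul_eq_mul, hudef]
    ring
  have htrC : C.trace = ∑ k, (c k : ℂ) := by
    rw [hspec, trace_mul_cycle, hV1, one_mul, trace_diagonal]
  have huu : ∀ k l, star (u k) ⬝ᵥ u l = if k = l then 1 else 0 := by
    intro k l
    have h2 := congrFun (congrFun hV1 k) l
    simp only [mul_apply, conjTranspose_apply, one_apply] at h2
    simpa [dotProduct, hudef] using h2
  have hXu : ∀ k l, star (Xᴴ *ᵥ u k) ⬝ᵥ (Xᴴ *ᵥ u l) = if k = l then ((c l : ℂ))^2 else 0 := by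
    intro k l
    rw [dp_shift, mulVec_mulVec, ← hMX, ← hCC, ← mulVec_mulVec, hCu l, mulVec_smul, hCu l,
      dotProduct_smul, dotProduct_smul, huu]
    by_cases hkl : k = l <;> simp [hkl] <;> ring
  set K : Finset (Fin d) := Finset.univ.filter (fun k => c k ≠ 0) with hKdef
  set w : Fin d → Fin d → ℂ := fun k => ((c k : ℂ))⁻¹ • (Xᴴ *ᵥ u k) with hwdef
  set a : Fin d → Fin d → ℂ := fun k => P *ᵥ u k with hadef
  set b : Fin d → Fin d → ℂ := fun k => B *ᵥ w k with hbdef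
  have hcK : ∀ k ∈ K, (c k : ℂ) ≠ 0 := by
    intro k hk
    simp only [hKdef, Finset.mem_filter] at hk
    exact_mod_cast hk.2
  have hww : ∀ k ∈ K, ∀ l ∈ K, star (w k) ⬝ᵥ w l = if k = l then 1 else 0 := by
    intro k hk l hl
    simp only [hwdef, star_smul, smul_dotProduct, dotProduct_smul, hXu, star_inv₀,
      RCLike.star_def, Complex.conj_ofReal]
    by_cases hkl : k = l
    · subst hkl
      simp only [if_pos rfl]
      rw [sq]
      simp only [if_true, smul_eq_mul]
      field_simp
      exact div_self (hcK k hk)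
    · simp [hkl]
  have hab : ∀ k ∈ K, star (a k) ⬝ᵥ b k = (c k : ℂ) := by
    intro k hk
    have h1 : star (a k) ⬝ᵥ b k
        = ((c k : ℂ))⁻¹ * (star (Xᴴ *ᵥ u k) ⬝ᵥ (Xᴴ *ᵥ u k)) := by
      show star (P *ᵥ u k) ⬝ᵥ (B *ᵥ w k) = _
      rw [dp_herm P hPH, mulVec_mulVec, ← hXdef, hwdef]
      simp only [mulVec_smul, dotProduct_smul, smul_eq_mul]
      rw [dp_shift, mulVec_mulVec]
    rw [h1, hXu]
    simp only [if_pos rfl]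
    simp only [if_true]
    rw [sq]
    field_simp
  have hba : ∀ k ∈ K, star (b k) ⬝ᵥ a k = (c k : ℂ) := by
    intro k hk
    rw [star_dotProduct, hab k hk, RCLike.star_def, Complex.conj_ofReal]
  -- sums of eigenvalues
  have hsum_c : ∑ k ∈ K, (c k : ℂ) = 1 := by
    rw [hKdef, Finset.sum_filter_of_ne (by intro x _ hx h0; exact hx (by rw [h0]; simp)),
      ← htrC]
    exact h
  have hna : ∀ k, star (a k) ⬝ᵥ a k = star (u k) ⬝ᵥ (ρ *ᵥ u k) := by
    intro k
    show star (P *ᵥ u k) ⬝ᵥ (P *ᵥ u k) = _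
    rw [dp_herm P hPH, mulVec_mulVec, hPP]
  have hSa_all : ∑ k, star (a k) ⬝ᵥ a k = 1 := by
    calc ∑ k, star (a k) ⬝ᵥ a k
        = ∑ k, star (fun i => V i k) ⬝ᵥ (ρ *ᵥ fun i => V i k) :=
          Finset.sum_congr rfl fun k _ => hna k
      _ = ρ.trace := sum_col_dp ρ V hV2
      _ = 1 := hρt
  have hsplit : (∑ k ∈ K, star (a k) ⬝ᵥ a k)
      + (∑ k ∈ Finset.univ.filter (fun k => ¬ c k ≠ 0), star (a k) ⬝ᵥ a k) = 1 := by
    rw [hKdef, Finset.sum_filter_add_sum_filter_not]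
    exact hSa_all
  have hDa0 : (0:ℂ) ≤ ∑ k ∈ Finset.univ.filter (fun k => ¬ c k ≠ 0), star (a k) ⬝ᵥ a k :=
    Finset.sum_nonneg fun k _ => dotProduct_star_self_nonneg _
  -- the projection Q
  set Q : Matrix (Fin d) (Fin d) ℂ := ∑ k ∈ K, vecMulVec (w k) (star (w k)) with hQdef
  have hQH : Qᴴ = Q := by
    rw [hQdef, conjTranspose_sum]
    exact Finset.sum_congr rfl fun k _ => conjTranspose_vecMulVec_star (w k)
  have hQQ : Q * Q = Q := by
    rw [hQdef, Finset.sum_mul_sum]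
    apply Finset.sum_congr rfl; intro k hk
    calc (∑ l ∈ K, vecMulVec (w k) (star (w k)) * vecMulVec (w l) (star (w l)))
        = ∑ l ∈ K, if k = l then vecMulVec (w k) (star (w l)) else 0 := by
          apply Finset.sum_congr rfl; intro l hl
          rw [vecMulVec_mul_vecMulVec, hww k hk l hl, ite_smul, one_smul, zero_smul]
      _ = vecMulVec (w k) (star (w k)) := by rw [Finset.sum_ite_eq K k, if_pos hk]
  have hBQB : (B * Q * B).trace = ∑ k ∈ K, star (b k) ⬝ᵥ b k := by
    rw [hQdef, Finset.mul_sum, Finset.sum_mul, trace_sum]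
    apply Finset.sum_congr rfl; intro k hk
    rw [mul_vecMulVec_mul B B (w k) (star (w k)), trace_vecMulVec]
    have hs : star (b k) = star (w k) ᵥ* B := by
      show star (B *ᵥ w k) = _
      rw [star_mulVec, hBH]
    rw [← hs]
  set Y : Matrix (Fin d) (Fin d) ℂ := (1 - Q) * B with hYdef
  have h1Q : (1 - Q) * (1 - Q) = 1 - Q := by
    rw [sub_mul, one_mul, mul_sub, mul_one, hQQ]
    abel
  have hYY : Yᴴ * Y = σ - B * Q * B := by
    have hQH1 : (1 - Q)ᴴ = 1 - Q := by rw [conjTranspose_sub, conjTranspose_one, hQH]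
    calc Yᴴ * Y = (Bᴴ * (1 - Q)ᴴ) * ((1 - Q) * B) := by rw [hYdef, conjTranspose_mul]
      _ = B * ((1 - Q) * (1 - Q)) * B := by rw [hBH, hQH1]; noncomm_ring
      _ = B * (1 - Q) * B := by rw [h1Q]
      _ = σ - B * Q * B := by rw [mul_sub, mul_one, sub_mul, ← hBB]
  have hDb0 : (0:ℂ) ≤ (Yᴴ * Y).trace := trace_cts_nonneg Y
  have hDbval : (Yᴴ * Y).trace = 1 - ∑ k ∈ K, star (b k) ⬝ᵥ b k := by
    rw [hYY, trace_sub, hσt, hBQB]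
  -- the deficit identity
  have hdelta : ∑ k ∈ K, star (b k - a k) ⬝ᵥ (b k - a k)
      = (∑ k ∈ K, star (b k) ⬝ᵥ b k) + (∑ k ∈ K, star (a k) ⬝ᵥ a k) - 2 := by
    have hterm : ∀ k ∈ K, star (b k - a k) ⬝ᵥ (b k - a k)
        = ((star (b k) ⬝ᵥ b k) + (star (a k) ⬝ᵥ a k)) - ((c k : ℂ) + (c k : ℂ)) := by
      intro k hk
      have : star (b k - a k) = star (b k) - star (a k) := star_sub _ _
      rw [this, sub_dotProduct, dotProduct_sub, dotProduct_sub, hab k hk, hba k hk]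
      ring
    rw [Finset.sum_congr rfl hterm, Finset.sum_sub_distrib, Finset.sum_add_distrib,
      Finset.sum_add_distrib, hsum_c]
    norm_num
  have hDelta0 : (0:ℂ) ≤ ∑ k ∈ K, star (b k - a k) ⬝ᵥ (b k - a k) :=
    Finset.sum_nonneg fun k _ => dotProduct_star_self_nonneg _
  -- combine: Δ = -(Da + Db)
  set Da : ℂ := ∑ k ∈ Finset.univ.filter (fun k => ¬ c k ≠ 0), star (a k) ⬝ᵥ a k with hDadef
  set Db : ℂ := (Yᴴ * Y).trace with hDbdef
  have hDelta_eq : ∑ k ∈ K, star (b k - a k) ⬝ᵥ (b k - a k) = -(Da + Db) := by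
    rw [hdelta]
    have h1 : ∑ k ∈ K, star (a k) ⬝ᵥ a k = 1 - Da := by
      linear_combination hsplit
    have h2 : ∑ k ∈ K, star (b k) ⬝ᵥ b k = 1 - Db := by
      linear_combination hDbval
    rw [h1, h2]; ring
  have hsum0 : Da + Db = 0 := by
    have h1 : Da + Db ≤ 0 := by
      rw [← neg_nonneg, ← hDelta_eq]; exact hDelta0
    exact le_antisymm h1 (add_nonneg hDa0 hDb0)
  have hDa : Da = 0 := ((add_eq_zero_iff_of_nonneg hDa0 hDb0).mp hsum0).1
  have hDb : Db = 0 := ((add_eq_zero_iff_of_nonneg hDa0 hDb0).mp hsum0).2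
  have hDelta : ∑ k ∈ K, star (b k - a k) ⬝ᵥ (b k - a k) = 0 := by
    rw [hDelta_eq, hsum0, neg_zero]
  -- extract equalities
  have hba_eq : ∀ k ∈ K, b k = a k := by
    have hz := (Finset.sum_eq_zero_iff_of_nonneg
      (fun k _ => dotProduct_star_self_nonneg (b k - a k))).mp hDelta
    intro k hk
    exact sub_eq_zero.mp (dotProduct_star_self_eq_zero.mp (hz k hk))
  have ha0 : ∀ k ∈ Finset.univ.filter (fun k => ¬ c k ≠ 0), a k = 0 := by
    have hz := (Finset.sum_eq_zero_iff_of_nonneg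
      (fun k (_ : k ∈ Finset.univ.filter (fun k => ¬ c k ≠ 0)) =>
        dotProduct_star_self_nonneg (a k))).mp hDa
    intro k hk
    exact dotProduct_star_self_eq_zero.mp (hz k hk)
  have hY0 : Y = 0 := trace_cts_eq_zero hDb
  have hQB : Q * B = B := by
    have h1 : (1 - Q) * B = 0 := hY0
    rw [sub_mul, one_mul, sub_eq_zero] at h1
    exact h1.symm
  -- reconstruct ρ and σ
  have hρsum : ρ = ∑ k ∈ K, vecMulVec (a k) (star (a k)) := by
    have h1 : ρ = ∑ k, vecMulVec (a k) (star (a k)) := by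
      have h2 : ρ = P * (V * Vᴴ) * P := by rw [hV2, mul_one, hPP]
      rw [h2, ← sum_outer_cols V, Finset.mul_sum, Finset.sum_mul]
      apply Finset.sum_congr rfl; intro k _
      rw [mul_vecMulVec_mul P P (fun i => V i k) (star fun i => V i k)]
      have hs : star (a k) = (star fun i => V i k) ᵥ* P := by
        show star (P *ᵥ u k) = _
        rw [star_mulVec, hPH]
      rw [← hs]
    rw [h1, ← Finset.sum_filter_add_sum_filter_not Finset.univ (fun k => c k ≠ 0), ← hKdef]
    have hz : ∑ k ∈ Finset.univ.filter (fun k => ¬ c k ≠ 0),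
        vecMulVec (a k) (star (a k)) = 0 := by
      apply Finset.sum_eq_zero; intro k hk
      rw [ha0 k hk]
      ext i j
      simp [vecMulVec_apply]
    rw [hz, add_zero]
  have hσsum : σ = ∑ k ∈ K, vecMulVec (b k) (star (b k)) := by
    calc σ = B * B := hBB.symm
      _ = B * (Q * B) := by rw [hQB]
      _ = B * Q * B := by rw [mul_assoc]
      _ = ∑ k ∈ K, vecMulVec (b k) (star (b k)) := by
          rw [hQdef, Finset.mul_sum, Finset.sum_mul]
          apply Finset.sum_congr rfl; intro k hk
          rw [mul_vecMulVec_mul B B (w k) (star (w k))]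
          have hs : star (b k) = star (w k) ᵥ* B := by
            show star (B *ᵥ w k) = _
            rw [star_mulVec, hBH]
          rw [← hs]
  rw [hρsum, hσsum]
  exact Finset.sum_congr rfl fun k hk => by rw [hba_eq k hk]

end FreeDM


open FreeDM in
theorem free_density_matrix_characterization
    (d : ℕ) (hd : 2 ≤ d)
    (H : Matrix (Fin d) (Fin d) ℂ) (hH : H.IsHermitian)
    (ψ : Fin d → Fin d → ℂ) (E : Fin d → ℝ)
    (horth : ∀ i j : Fin d, star (ψ i) ⬝ᵥ ψ j = if i = j then 1 else 0)
    (heig : ∀ i : Fin d, H *ᵥ ψ i = (E i : ℂ) • ψ i)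
    (T : ℕ) (hT : 0 < T)
    (A B : Finset (Fin d))
    (hdisj : Disjoint A B) (hcover : A ∪ B = Finset.univ)
    (hArat : ∀ i ∈ A, ∃ m : ℤ, E i * (T : ℝ) = (m : ℝ))
    (hBirr : ∀ i ∈ B, Irrational (E i))
    (hBdiff : ∀ i ∈ B, ∀ j ∈ B, i ≠ j → Irrational (E i - E j))
    (hAcard : 1 < A.card) (hBcard : 1 < B.card)
    (ρ : Matrix (Fin d) (Fin d) ℂ) (hρ : ρ.PosSemidef) (htr : ρ.trace = 1) :
    FRM H T ρ = 1 ↔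
      ∀ i j : Fin d, i ≠ j → (i ∈ B ∨ j ∈ B) → star (ψ i) ⬝ᵥ (ρ *ᵥ ψ j) = 0 := by
  classical
  set Ψ : Matrix (Fin d) (Fin d) ℂ := Matrix.of (fun i j => ψ j i) with hΨdef
  have hΨ1 : Ψᴴ * Ψ = 1 := by
    ext i j
    have h0 := horth i j
    simp only [dotProduct, Pi.star_apply] at h0
    simp only [mul_apply, conjTranspose_apply, hΨdef, of_apply, one_apply]
    exact h0
  have hΨ2 : Ψ * Ψᴴ = 1 := mul_eq_one_comm.mp hΨ1
  have hHdiag : H * Ψ = Ψ * diagonal (fun j => (E j : ℂ)) := by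
    ext i j
    have h0 := congrFun (heig j) i
    simp only [mulVec, dotProduct, Pi.smul_apply, smul_eq_mul] at h0
    rw [mul_diagonal]
    simp only [mul_apply, hΨdef, of_apply]
    rw [h0]; ring
  set t : ℝ := 2 * Real.pi * T with htdef
  set μ : Fin d → ℂ := fun j => Complex.exp (-(Complex.I * (t : ℂ)) * (E j : ℂ)) with hμdef
  have hU : Uevol H t = Ψ * diagonal μ * Ψᴴ := by
    have hinv : Ψ⁻¹ = Ψᴴ := Matrix.inv_eq_left_inv hΨ1
    have hunit : IsUnit Ψ := by
      have := invertibleOfRightInverse Ψ Ψᴴ hΨ2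
      exact isUnit_of_invertible Ψ
    have hHfac : (-(Complex.I * (t:ℂ))) • H
        = Ψ * ((-(Complex.I * (t:ℂ))) • diagonal (fun j => (E j:ℂ))) * Ψ⁻¹ := by
      rw [hinv, Matrix.mul_smul, Matrix.smul_mul]
      congr 1
      have h1 : H = H * (Ψ * Ψᴴ) := by rw [hΨ2, mul_one]
      rw [h1, ← mul_assoc, hHdiag]
    rw [Uevol, hHfac, Matrix.exp_conj Ψ _ hunit, hinv]
    congr 2
    have hd : (-(Complex.I * (t:ℂ))) • diagonal (fun j => (E j:ℂ))
        = diagonal (fun j => -(Complex.I * (t:ℂ)) * (E j:ℂ)) := by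
      rw [← diagonal_smul]
      congr 1
    rw [hd, Matrix.exp_diagonal, Pi.exp_def, hμdef]
    congr 1
    funext j
    rw [← Complex.exp_eq_exp_ℂ]
  -- basic phase facts
  have hT0 : (T : ℕ) ≠ 0 := hT.ne'
  have hμ_unit : ∀ i, μ i * star (μ i) = 1 := by
    intro i
    have hc : star (μ i) = Complex.exp (Complex.I * (t:ℂ) * (E i:ℂ)) := by
      rw [hμdef]
      show (starRingEnd ℂ) (Complex.exp _) = _
      rw [← Complex.exp_conj]
      congr 1
      simp only [_root_.map_neg, _root_.map_mul, Complex.conj_I, Complex.conj_ofReal]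
      ring
    rw [hμdef, hc, ← Complex.exp_add]
    show Complex.exp _ = 1
    rw [show -(Complex.I * (t:ℂ)) * (E i:ℂ) + Complex.I * (t:ℂ) * (E i:ℂ) = 0 by ring]
    exact Complex.exp_zero
  have hμA : ∀ i ∈ A, μ i = 1 := by
    intro i hi
    obtain ⟨m, hm⟩ := hArat i hi
    have hmℂ : ((E i : ℂ)) * (T:ℂ) = (m:ℂ) := by exact_mod_cast congrArg Complex.ofReal hm
    rw [hμdef]
    show Complex.exp _ = 1
    rw [Complex.exp_eq_one_iff]
    refine ⟨-m, ?_⟩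
    rw [htdef]
    push_cast
    linear_combination (-(2*(Real.pi:ℂ)*Complex.I)) * hmℂ
  have hphase_ne : ∀ i j : Fin d, i ≠ j → (i ∈ B ∨ j ∈ B) → μ i * star (μ j) ≠ 1 := by
    intro i j hij hB hEq
    have hc : star (μ j) = Complex.exp (Complex.I * (t:ℂ) * (E j:ℂ)) := by
      rw [hμdef]
      show (starRingEnd ℂ) (Complex.exp _) = _
      rw [← Complex.exp_conj]
      congr 1
      simp only [_root_.map_neg, _root_.map_mul, Complex.conj_I, Complex.conj_ofReal]
      ring
    rw [hμdef, hc] at hEq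
    have hEq2 : Complex.exp (-(Complex.I * (t:ℂ)) * (E i:ℂ) + Complex.I * (t:ℂ) * (E j:ℂ)) = 1 := by
      rw [Complex.exp_add]; exact hEq
    obtain ⟨n, hn⟩ := Complex.exp_eq_one_iff.mp hEq2
    have hππ : (2*(Real.pi:ℂ)*Complex.I) ≠ 0 := by
      simp [Real.pi_ne_zero, Complex.I_ne_zero, Complex.ofReal_ne_zero]
    have h2 : (2*(Real.pi:ℂ)*Complex.I) * ((T:ℂ) * ((E j:ℂ) - (E i:ℂ)))
        = (2*(Real.pi:ℂ)*Complex.I) * (n:ℂ) := by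
      rw [htdef] at hn
      push_cast at hn ⊢
      linear_combination hn
    have h3 : ((T:ℂ) * ((E j:ℂ) - (E i:ℂ))) = (n:ℂ) := mul_left_cancel₀ hππ h2
    have hreal : (T:ℝ) * (E j - E i) = (n:ℤ) := by exact_mod_cast h3
    have hcov : ∀ k : Fin d, k ∈ A ∨ k ∈ B := by
      intro k
      have hk := Finset.mem_univ k
      rw [← hcover, Finset.mem_union] at hk
      exact hk
    have key : Irrational ((T:ℝ) * (E j - E i)) := by
      rcases hB with hiB | hjB
      · rcases hcov j with hjA | hjB
        · obtain ⟨m, hm⟩ := hArat j hjA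
          have he : (T:ℝ) * (E j - E i) = (m:ℝ) - (T:ℝ) * E i := by
            rw [mul_sub]; linear_combination hm
          rw [he]
          exact ((hBirr i hiB).natCast_mul hT0).intCast_sub m
        · have := hBdiff j hjB i hiB (Ne.symm hij)
          exact this.natCast_mul hT0
      · rcases hcov i with hiA | hiB
        · obtain ⟨m, hm⟩ := hArat i hiA
          have he : (T:ℝ) * (E j - E i) = (T:ℝ) * E j - (m:ℝ) := by
            rw [mul_sub]; linear_combination -hm
          rw [he]
          exact ((hBirr j hjB).natCast_mul hT0).sub_intCast m
        · have := hBdiff j hjB i hiB (Ne.symm hij)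
          exact this.natCast_mul hT0
    exact key.ne_int n hreal
  -- unitarity and sigma
  have hUU : (Uevol H t) * (Uevol H t)ᴴ = 1 := by
    have hDDH : diagonal μ * (diagonal μ)ᴴ = 1 := by
      rw [diagonal_conjTranspose, diagonal_mul_diagonal]
      have he : (fun i => μ i * star μ i) = fun _ => (1:ℂ) := funext fun i => hμ_unit i
      rw [he, diagonal_one]
    rw [hU, conjTranspose_mul, conjTranspose_mul, conjTranspose_conjTranspose]
    calc Ψ * diagonal μ * Ψᴴ * (Ψ * ((diagonal μ)ᴴ * Ψᴴ))
        = Ψ * diagonal μ * (Ψᴴ * Ψ) * ((diagonal μ)ᴴ * Ψᴴ) := by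
          noncomm_ring
      _ = Ψ * (diagonal μ * (diagonal μ)ᴴ) * Ψᴴ := by rw [hΨ1]; noncomm_ring
      _ = 1 := by rw [hDDH, mul_one, hΨ2]
  set σ : Matrix (Fin d) (Fin d) ℂ := Uevol H t * ρ * (Uevol H t)ᴴ with hσdef
  have hσpsd : σ.PosSemidef := hρ.mul_mul_conjTranspose_same (Uevol H t)
  have hσtr : σ.trace = 1 := by
    rw [hσdef, trace_mul_cycle, mul_eq_one_comm.mp hUU, one_mul, htr]
  have hFRM : FRM H T ρ = (psdSqrt (psdSqrt ρ * σ * psdSqrt ρ)).trace := rfl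
  -- entries
  set r : Matrix (Fin d) (Fin d) ℂ := Ψᴴ * ρ * Ψ with hrdef
  have hρr : ρ = Ψ * r * Ψᴴ := by
    rw [hrdef]
    calc ρ = (Ψ * Ψᴴ) * ρ * (Ψ * Ψᴴ) := by rw [hΨ2, one_mul, mul_one]
      _ = Ψ * (Ψᴴ * ρ * Ψ) * Ψᴴ := by noncomm_ring
  have hrentry : ∀ i j, r i j = star (ψ i) ⬝ᵥ (ρ *ᵥ ψ j) := by
    intro i j
    simp only [hrdef, mul_apply, conjTranspose_apply, hΨdef, of_apply, dotProduct, mulVec,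
      Pi.star_apply, Finset.sum_mul]
    rw [Finset.sum_comm]
    apply Finset.sum_congr rfl; intro p _
    rw [Finset.mul_sum]
    apply Finset.sum_congr rfl; intro q _
    ring
  have hσexp : σ = Ψ * (diagonal μ * r * (diagonal μ)ᴴ) * Ψᴴ := by
    rw [hσdef, hU, hρr, hrdef]
    simp only [conjTranspose_mul, conjTranspose_conjTranspose]
    calc Ψ * diagonal μ * Ψᴴ * (Ψ * (Ψᴴ * ρ * Ψ) * Ψᴴ) * (Ψ * ((diagonal μ)ᴴ * Ψᴴ))
        = Ψ * diagonal μ * ((Ψᴴ * Ψ) * (Ψᴴ * ρ * Ψ) * (Ψᴴ * Ψ)) * (diagonal μ)ᴴ * Ψᴴ := by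
          noncomm_ring
      _ = Ψ * (diagonal μ * (Ψᴴ * ρ * Ψ) * (diagonal μ)ᴴ) * Ψᴴ := by
          rw [hΨ1, one_mul, mul_one]
          noncomm_ring
  have hcancel : ∀ Z Z' : Matrix (Fin d) (Fin d) ℂ, Ψ * Z * Ψᴴ = Ψ * Z' * Ψᴴ → Z = Z' := by
    intro Z Z' hzz
    have h1 := congrArg (fun W => Ψᴴ * W * Ψ) hzz
    calc Z = (Ψᴴ * Ψ) * Z * (Ψᴴ * Ψ) := by rw [hΨ1, one_mul, mul_one]
      _ = Ψᴴ * (Ψ * Z * Ψᴴ) * Ψ := by noncomm_ring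
      _ = Ψᴴ * (Ψ * Z' * Ψᴴ) * Ψ := by rw [hzz]
      _ = (Ψᴴ * Ψ) * Z' * (Ψᴴ * Ψ) := by noncomm_ring
      _ = Z' := by rw [hΨ1, one_mul, mul_one]
  have hDentry : ∀ i j, (diagonal μ * r * (diagonal μ)ᴴ) i j = μ i * r i j * star (μ j) := by
    intro i j
    rw [diagonal_conjTranspose, mul_diagonal, diagonal_mul]
    simp only [Pi.star_apply]
  constructor
  · intro hF i j hij hB
    have hρσ : ρ = σ := fidelity_eq_one hρ hσpsd htr hσtr (by rw [← hFRM]; exact hF)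
    have hDrD : diagonal μ * r * (diagonal μ)ᴴ = r := by
      apply hcancel
      rw [← hσexp, ← hρσ, hρr]
    have hent : μ i * r i j * star (μ j) = r i j := by
      rw [← hDentry i j, hDrD]
    have hz : r i j * (μ i * star (μ j) - 1) = 0 := by linear_combination hent
    rcases mul_eq_zero.mp hz with h0 | h0
    · rw [← hrentry]; exact h0
    · exact absurd (sub_eq_zero.mp h0) (hphase_ne i j hij hB)
  · intro hcond
    have hDrD : diagonal μ * r * (diagonal μ)ᴴ = r := by
      ext i j
      rw [hDentry i j]
      by_cases hij : i = j
      · subst hij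
        linear_combination (r i i) * hμ_unit i
      · by_cases hBij : i ∈ B ∨ j ∈ B
        · rw [hrentry i j, hcond i j hij hBij]; ring
        · push_neg at hBij
          have hcov : ∀ k : Fin d, k ∈ A ∨ k ∈ B := by
            intro k
            have hk := Finset.mem_univ k
            rw [← hcover, Finset.mem_union] at hk
            exact hk
          have hiA : i ∈ A := (hcov i).resolve_right hBij.1
          have hjA : j ∈ A := (hcov j).resolve_right hBij.2
          rw [hμA i hiA, hμA j hjA]
          simp
    have hσρ : σ = ρ := by rw [hσexp, hDrD, ← hρr]
    rw [hFRM, hσρ]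
    have hPdef : psdSqrt ρ = psdSqrt ρ := rfl
    have hsq : psdSqrt ρ * ρ * psdSqrt ρ = ρ ^ 2 := by
      obtain ⟨S, hS⟩ : ∃ S : Matrix (Fin d) (Fin d) ℂ, psdSqrt ρ = S := ⟨_, rfl⟩
      have hSS : S * S = ρ := by rw [← hS]; exact psdSqrt_mul_self hρ
      rw [hPdef, hS, ← hSS]
      noncomm_ring
    rw [hsq]
    have h2 : psdSqrt (ρ^2) = ρ := by
      exact psdSqrt_sq hρ
    rw [h2]
    exact htr
end
end

section
/- For every normalized observable O on ℂ^d, the revival correlator satisfies G(O) = 1 if and only if ⟨ψ_i, O ψ_j⟩ = 0 for every pair of distinct indices i, j ∈ I with i ∈ ℬ or j ∈ ℬ; equivalently, O = Σ_{i,j∈𝒜} a_{i,j}·ψ_i ψ_j* + Σ_{i∈ℬ} a_{i,i}·ψ_i ψ_i* for some coefficients a_{i,j}. -/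
open Matrix Complex

noncomputable section

/-- Normalized Hilbert-Schmidt inner product `⟨A,B⟩ = (1/d)·tr(A*B)`. -/
def hsInner {d : ℕ} (A B : Matrix (Fin d) (Fin d) ℂ) : ℂ := (Aᴴ * B).trace / (d : ℂ)

/-- Heisenberg-evolved observable `O(2πT) = U(2πT)* O U(2πT)`. -/
def Heis {d : ℕ} (H : Matrix (Fin d) (Fin d) ℂ) (T : ℕ)
    (O : Matrix (Fin d) (Fin d) ℂ) : Matrix (Fin d) (Fin d) ℂ :=
  (Uevol H (2 * Real.pi * T))ᴴ * O * Uevol H (2 * Real.pi * T)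

/-- Revival correlator `G(O) = |⟨O(2πT), O⟩|²`. -/
def Gcorr {d : ℕ} (H : Matrix (Fin d) (Fin d) ℂ) (T : ℕ)
    (O : Matrix (Fin d) (Fin d) ℂ) : ℝ :=
  ‖hsInner (Heis H T O) O‖ ^ 2

/-- A free observable: a normalized observable with `G(O) = 1`. -/
def IsFreeObs {d : ℕ} (H : Matrix (Fin d) (Fin d) ℂ) (T : ℕ)
    (O : Matrix (Fin d) (Fin d) ℂ) : Prop :=
  O.IsHermitian ∧ hsInner O O = 1 ∧ Gcorr H T O = 1

/-- Equality case of the triangle inequality for convex combinations of unimodular numbers. -/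
lemma key_convex {ι : Type*} (s : Finset ι) (p : ι → ℝ) (c : ι → ℂ)
    (hp : ∀ k ∈ s, 0 ≤ p k) (hc : ∀ k ∈ s, ‖c k‖ = 1)
    (hsum : ∑ k ∈ s, p k = 1) (z : ℂ) (hz : z = ∑ k ∈ s, (p k : ℂ) * c k)
    (habs : ‖z‖ = 1) :
    ∀ k ∈ s, p k ≠ 0 → c k = z := by
  have hnsz : Complex.normSq z = 1 := by
    rw [← Complex.sq_norm, habs]; norm_num
  have hzz : (starRingEnd ℂ) z * z = ∑ k ∈ s, (p k : ℂ) * ((starRingEnd ℂ) z * c k) := by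
    nth_rewrite 2 [hz]
    rw [Finset.mul_sum]
    exact Finset.sum_congr rfl fun k _ => by ring
  have h1 : ∑ k ∈ s, p k * ((starRingEnd ℂ) z * c k).re = 1 := by
    have := congrArg Complex.re hzz
    rw [mul_comm, Complex.mul_conj, Complex.re_sum] at this
    simp only [Complex.ofReal_re] at this
    rw [← hnsz]
    rw [this]
    exact Finset.sum_congr rfl fun k _ => by
      rw [Complex.re_ofReal_mul]
  have hle : ∀ k ∈ s, ((starRingEnd ℂ) z * c k).re ≤ 1 := by
    intro k hk
    calc ((starRingEnd ℂ) z * c k).re ≤ ‖(starRingEnd ℂ) z * c k‖ := Complex.re_le_norm _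
      _ = 1 := by rw [norm_mul, Complex.norm_conj, habs, hc k hk, one_mul]
  have hzero : ∀ k ∈ s, p k * (1 - ((starRingEnd ℂ) z * c k).re) = 0 := by
    have hsum0 : ∑ k ∈ s, p k * (1 - ((starRingEnd ℂ) z * c k).re) = 0 := by
      simp only [mul_sub, mul_one, Finset.sum_sub_distrib, hsum, h1, sub_self]
    have := (Finset.sum_eq_zero_iff_of_nonneg ?_).mp hsum0
    · exact this
    · intro k hk
      exact mul_nonneg (hp k hk) (by linarith [hle k hk])
  intro k hk hpk
  have h2 : ((starRingEnd ℂ) z * c k).re = 1 := by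
    have := hzero k hk
    rcases mul_eq_zero.mp this with h | h
    · exact absurd h hpk
    · linarith
  have habsw : ‖(starRingEnd ℂ) z * c k‖ = 1 := by
    rw [norm_mul, Complex.norm_conj, habs, hc k hk, one_mul]
  have hw1 : (starRingEnd ℂ) z * c k = 1 := by
    have him : ((starRingEnd ℂ) z * c k).im = 0 := by
      have := Complex.sq_norm ((starRingEnd ℂ) z * c k)
      rw [habsw, Complex.normSq_apply, h2] at this
      nlinarith [sq_nonneg ((starRingEnd ℂ) z * c k).im]
    exact Complex.ext (by simp [h2]) (by simp [him])
  have hfin : z * ((starRingEnd ℂ) z * c k) = z := by rw [hw1, mul_one]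
  rw [← mul_assoc, Complex.mul_conj, hnsz] at hfin
  simpa using hfin

theorem free_observable_characterization
    (d : ℕ) (hd : 2 ≤ d)
    (H : Matrix (Fin d) (Fin d) ℂ) (hH : H.IsHermitian)
    (ψ : Fin d → Fin d → ℂ) (E : Fin d → ℝ)
    (horth : ∀ i j : Fin d, star (ψ i) ⬝ᵥ ψ j = if i = j then 1 else 0)
    (heig : ∀ i : Fin d, H *ᵥ ψ i = (E i : ℂ) • ψ i)
    (T : ℕ) (hT : 0 < T)
    (A B : Finset (Fin d))
    (hdisj : Disjoint A B) (hcover : A ∪ B = Finset.univ)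
    (hArat : ∀ i ∈ A, ∃ m : ℤ, E i * (T : ℝ) = (m : ℝ))
    (hBirr : ∀ i ∈ B, Irrational (E i))
    (hBdiff : ∀ i ∈ B, ∀ j ∈ B, i ≠ j → Irrational (E i - E j))
    (hAcard : 1 < A.card) (hBcard : 1 < B.card)
    (O : Matrix (Fin d) (Fin d) ℂ) (hO : O.IsHermitian) (hnorm : hsInner O O = 1) :
    Gcorr H T O = 1 ↔
      ∀ i j : Fin d, i ≠ j → (i ∈ B ∨ j ∈ B) → star (ψ i) ⬝ᵥ (O *ᵥ ψ j) = 0 := by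
  classical
  have hdR : (0:ℝ) < d := by
    have : 0 < d := lt_of_lt_of_le (by norm_num) hd
    exact_mod_cast this
  have hdC : (d : ℂ) ≠ 0 := by
    exact_mod_cast ne_of_gt (show (0:ℝ) < (d:ℝ) from hdR)
  set t : ℝ := 2 * Real.pi * T with ht
  set u : Fin d → ℂ := fun i => Complex.exp (-(Complex.I * t) * E i) with hu
  set P : Matrix (Fin d) (Fin d) ℂ := Matrix.of (fun k i => ψ i k) with hP
  -- unitarity of P
  have hPHP : Pᴴ * P = 1 := by
    ext i j
    simpa [Matrix.mul_apply, Matrix.conjTranspose_apply, Matrix.one_apply, dotProduct, hP]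
      using horth i j
  have hPPH : P * Pᴴ = 1 := mul_eq_one_comm.mp hPHP
  have hPinv : P⁻¹ = Pᴴ := Matrix.inv_eq_right_inv hPPH
  have hPunit : IsUnit P := ⟨⟨P, Pᴴ, hPPH, hPHP⟩, rfl⟩
  -- diagonalization of the evolution
  have hU : Uevol H t = P * Matrix.diagonal u * Pᴴ := by
    have hHP : H * P = P * Matrix.diagonal (fun i => (E i : ℂ)) := by
      ext k j
      have h := congrFun (heig j) k
      simp only [Matrix.mulVec, dotProduct, Pi.smul_apply, smul_eq_mul] at h
      rw [Matrix.mul_apply, Matrix.mul_diagonal]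
      simp only [hP, Matrix.of_apply]
      rw [mul_comm]
      exact h
    have hHd : H = P * Matrix.diagonal (fun i => (E i : ℂ)) * P⁻¹ := by
      rw [hPinv, ← hHP, Matrix.mul_assoc, hPPH, Matrix.mul_one]
    have hdiag : (-(Complex.I * (t : ℂ))) • Matrix.diagonal (fun i => (E i : ℂ))
        = Matrix.diagonal (fun i => -(Complex.I * t) * E i) := by
      rw [← Matrix.diagonal_smul]
      congr 1
    have hsmul : (-(Complex.I * (t:ℂ))) • H
        = P * Matrix.diagonal (fun i => (-(Complex.I * (t:ℂ))) * E i) * P⁻¹ := by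
      rw [hHd, Matrix.mul_assoc, ← mul_smul_comm, ← smul_mul_assoc, hdiag, ← Matrix.mul_assoc]
    rw [Uevol, hsmul, Matrix.exp_conj P _ hPunit, Matrix.exp_diagonal, hPinv]
    congr 2
    rw [Pi.exp_def]
    funext i
    rw [← Complex.exp_eq_exp_ℂ]
  -- conjugated observable
  set O' : Matrix (Fin d) (Fin d) ℂ := Pᴴ * O * P with hO'def
  have hO'entry : ∀ i j, O' i j = star (ψ i) ⬝ᵥ (O *ᵥ ψ j) := by
    intro i j
    rw [hO'def, Matrix.mul_assoc]
    simp only [Matrix.mul_apply, Matrix.conjTranspose_apply, dotProduct, Matrix.mulVec, hP,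
      Matrix.of_apply, Finset.mul_sum]
    rfl
  have hO'herm : ∀ i j, O' j i = (starRingEnd ℂ) (O' i j) := by
    intro i j
    have h1 : O'ᴴ = O' := by
      rw [hO'def]
      simp only [Matrix.conjTranspose_mul, Matrix.conjTranspose_conjTranspose, hO.eq,
        Matrix.mul_assoc]
    have := congrFun (congrFun h1 j) i
    rw [Matrix.conjTranspose_apply] at this
    rw [← this]
    rfl
  -- trace conjugation invariance
  have htr : ∀ X Y : Matrix (Fin d) (Fin d) ℂ,
      ((Pᴴ * X * P)ᴴ * (Pᴴ * Y * P)).trace = (Xᴴ * Y).trace := by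
    intro X Y
    have e1 : (Pᴴ * X * P)ᴴ = Pᴴ * Xᴴ * P := by
      simp [Matrix.conjTranspose_mul, Matrix.mul_assoc]
    have e2 : (Pᴴ * X * P)ᴴ * (Pᴴ * Y * P) = Pᴴ * (Xᴴ * Y) * P := by
      rw [e1]
      calc Pᴴ * Xᴴ * P * (Pᴴ * Y * P) = Pᴴ * (Xᴴ * ((P * Pᴴ) * (Y * P))) := by
            simp only [Matrix.mul_assoc]
        _ = Pᴴ * (Xᴴ * Y) * P := by rw [hPPH, Matrix.one_mul]; simp only [Matrix.mul_assoc]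
    rw [e2, Matrix.trace_mul_comm, ← Matrix.mul_assoc, ← Matrix.mul_assoc, hPPH, Matrix.one_mul]
  have hnorm' : hsInner O' O' = 1 := by
    rw [hsInner, hO'def, htr O O]
    exact hnorm
  -- the Heisenberg-evolved matrix in the eigenbasis
  have hHeis : Pᴴ * Heis H T O * P
      = Matrix.diagonal (fun i => (starRingEnd ℂ) (u i)) * O' * Matrix.diagonal u := by
    have hUd : Uevol H (2 * Real.pi * T) = P * Matrix.diagonal u * Pᴴ := by rw [← ht]; exact hU
    have hUdH : (Uevol H (2 * Real.pi * T))ᴴ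
        = P * Matrix.diagonal (fun i => (starRingEnd ℂ) (u i)) * Pᴴ := by
      rw [hUd]
      simp only [Matrix.conjTranspose_mul, Matrix.conjTranspose_conjTranspose,
        Matrix.diagonal_conjTranspose, Matrix.mul_assoc]
      rfl
    have hcanc1 : ∀ M : Matrix (Fin d) (Fin d) ℂ, Pᴴ * (P * M) = M := by
      intro M; rw [← Matrix.mul_assoc, hPHP, Matrix.one_mul]
    rw [Heis, hUdH, hUd, hO'def]
    simp only [Matrix.mul_assoc]
    rw [hPHP, Matrix.mul_one, hcanc1]
  -- the correlator as a convex combination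
  set z : ℂ := hsInner (Heis H T O) O with hzdef
  have hGz : Gcorr H T O = ‖z‖ ^ 2 := rfl
  have hq0 : ∀ pr : Fin d × Fin d, 0 ≤ Complex.normSq (O' pr.1 pr.2) / d :=
    fun pr => div_nonneg (Complex.normSq_nonneg _) (le_of_lt hdR)
  -- trace expansions
  have hexpand : ∀ M N : Matrix (Fin d) (Fin d) ℂ,
      (Mᴴ * N).trace = ∑ i : Fin d, ∑ j : Fin d, (starRingEnd ℂ) (M j i) * N j i := by
    intro M N
    rw [Matrix.trace]
    simp only [Matrix.diag_apply, Matrix.mul_apply, Matrix.conjTranspose_apply]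
    rfl
  have hqsum : ∑ pr : Fin d × Fin d, Complex.normSq (O' pr.1 pr.2) / d = 1 := by
    have h1 : (O'ᴴ * O').trace
        = ∑ pr : Fin d × Fin d, ((Complex.normSq (O' pr.1 pr.2) : ℝ) : ℂ) := by
      rw [hexpand, Fintype.sum_prod_type, Finset.sum_comm]
      refine Finset.sum_congr rfl fun a _ => Finset.sum_congr rfl fun b _ => ?_
      rw [Complex.normSq_eq_conj_mul_self]
    have h2 := hnorm'
    rw [hsInner, h1, div_eq_one_iff_eq hdC] at h2
    have h4 : ∑ pr : Fin d × Fin d, Complex.normSq (O' pr.1 pr.2) = d := by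
      exact_mod_cast h2
    rw [← Finset.sum_div, h4, div_self (ne_of_gt hdR)]
  have hzval : z = ∑ pr : Fin d × Fin d,
      ((Complex.normSq (O' pr.1 pr.2) / d : ℝ) : ℂ) * (u pr.1 * (starRingEnd ℂ) (u pr.2)) := by
    have hMentry : ∀ a b,
        (Matrix.diagonal (fun i => (starRingEnd ℂ) (u i)) * O' * Matrix.diagonal u) a b
        = (starRingEnd ℂ) (u a) * O' a b * u b := by
      intro a b
      rw [Matrix.mul_diagonal, Matrix.diagonal_mul]
    have h2 : ((Matrix.diagonal (fun i => (starRingEnd ℂ) (u i)) * O' * Matrix.diagonal u)ᴴ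
          * O').trace
        = ∑ pr : Fin d × Fin d, ((Complex.normSq (O' pr.1 pr.2) : ℝ) : ℂ)
            * (u pr.1 * (starRingEnd ℂ) (u pr.2)) := by
      rw [hexpand, Fintype.sum_prod_type, Finset.sum_comm]
      refine Finset.sum_congr rfl fun a _ => Finset.sum_congr rfl fun b _ => ?_
      rw [hMentry, _root_.map_mul, _root_.map_mul, Complex.conj_conj,
        Complex.normSq_eq_conj_mul_self]
      ring
    have h1 : ((Heis H T O)ᴴ * O).trace
        = ((Pᴴ * Heis H T O * P)ᴴ * (Pᴴ * O * P)).trace := (htr _ _).symm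
    rw [hzdef, hsInner, h1, hHeis, ← hO'def, h2, Finset.sum_div]
    refine Finset.sum_congr rfl fun pr _ => ?_
    push_cast
    ring
  -- unimodularity and phase values
  have habsu : ∀ i, ‖u i‖ = 1 := by
    intro i
    simp only [hu]
    rw [Complex.norm_exp]
    norm_num
  have hmem : ∀ k : Fin d, k ∈ A ∨ k ∈ B := by
    intro k
    have : k ∈ A ∪ B := by rw [hcover]; exact Finset.mem_univ k
    exact Finset.mem_union.mp this
  have hTne : (T : ℝ) ≠ 0 := by
    exact_mod_cast hT.ne'
  have hcform : ∀ i j, u i * (starRingEnd ℂ) (u j)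
      = Complex.exp (Complex.I * ((t * (E j - E i) : ℝ) : ℂ)) := by
    intro i j
    simp only [hu]
    rw [← Complex.exp_conj, ← Complex.exp_add]
    congr 1
    simp only [_root_.map_mul, map_neg, Complex.conj_I, Complex.conj_ofReal]
    push_cast
    ring
  have hcdiag : ∀ i, u i * (starRingEnd ℂ) (u i) = 1 := by
    intro i
    rw [Complex.mul_conj]
    rw [← Complex.sq_norm, habsu i]
    norm_num
  have hcabs : ∀ i j, ‖u i * (starRingEnd ℂ) (u j)‖ = 1 := by
    intro i j
    rw [norm_mul, Complex.norm_conj, habsu, habsu, mul_one]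
  have hcA : ∀ i ∈ A, ∀ j ∈ A, u i * (starRingEnd ℂ) (u j) = 1 := by
    intro i hi j hj
    obtain ⟨mi, hmi⟩ := hArat i hi
    obtain ⟨mj, hmj⟩ := hArat j hj
    rw [hcform]
    have hre : t * (E j - E i) = ((mj - mi : ℤ) : ℝ) * (2 * Real.pi) := by
      have e1 : t * (E j - E i) = 2 * Real.pi * (E j * T) - 2 * Real.pi * (E i * T) := by
        rw [ht]; ring
      rw [e1, hmi, hmj]; push_cast; ring
    have e2 : Complex.I * ((t * (E j - E i) : ℝ) : ℂ)
        = ((mj - mi : ℤ) : ℂ) * (2 * (Real.pi : ℂ) * Complex.I) := by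
      rw [hre]; push_cast; ring
    rw [e2, Complex.exp_int_mul_two_pi_mul_I]
  constructor
  · -- forward direction
    intro hG i j hij hBij
    rw [← hO'entry]
    by_contra hne
    have habsz : ‖z‖ = 1 := by
      have h0 := norm_nonneg z
      have h1 : ‖z‖ ^ 2 = 1 := by rw [← hGz]; exact hG
      have h2 : (‖z‖ - 1) * (‖z‖ + 1) = 0 := by linear_combination h1
      rcases mul_eq_zero.mp h2 with h | h
      · linarith
      · linarith
    have hqs := key_convex Finset.univ
        (fun pr : Fin d × Fin d => Complex.normSq (O' pr.1 pr.2) / d)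
        (fun pr : Fin d × Fin d => u pr.1 * (starRingEnd ℂ) (u pr.2))
        (fun pr _ => hq0 pr) (fun pr _ => hcabs pr.1 pr.2)
        hqsum z hzval habsz
    have hq1 : Complex.normSq (O' i j) / d ≠ 0 := by
      have hnz : Complex.normSq (O' i j) ≠ 0 := by
        simpa [Complex.normSq_eq_zero] using hne
      exact div_ne_zero hnz (ne_of_gt hdR)
    have hq2 : Complex.normSq (O' j i) / d ≠ 0 := by
      have hnz : Complex.normSq (O' j i) ≠ 0 := by
        rw [hO'herm i j, Complex.normSq_conj]
        simpa [Complex.normSq_eq_zero] using hne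
      exact div_ne_zero hnz (ne_of_gt hdR)
    have h1 : u i * (starRingEnd ℂ) (u j) = z := hqs (i, j) (Finset.mem_univ _) hq1
    have h2 : u j * (starRingEnd ℂ) (u i) = z := hqs (j, i) (Finset.mem_univ _) hq2
    have hzz1 : z * z = 1 := by
      have h3 : Complex.exp (Complex.I * ((t * (E j - E i) : ℝ) : ℂ)
          + Complex.I * ((t * (E i - E j) : ℝ) : ℂ)) = z * z := by
        rw [Complex.exp_add, ← hcform i j, ← hcform j i, h1, h2]
      have h4 : Complex.I * ((t * (E j - E i) : ℝ) : ℂ)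
          + Complex.I * ((t * (E i - E j) : ℝ) : ℂ) = 0 := by push_cast; ring
      rw [h4, Complex.exp_zero] at h3
      exact h3.symm
    have hz2 : Complex.exp (Complex.I * ((t * (E j - E i) : ℝ) : ℂ)
        + Complex.I * ((t * (E j - E i) : ℝ) : ℂ)) = 1 := by
      rw [Complex.exp_add, ← hcform i j, h1]
      exact hzz1
    obtain ⟨n, hn⟩ := Complex.exp_eq_one_iff.mp hz2
    have hreal : 2 * (t * (E j - E i)) = (n : ℝ) * (2 * Real.pi) := by
      have h6 : Complex.I * ((2 * (t * (E j - E i)) : ℝ) : ℂ)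
          = Complex.I * (((n : ℝ) * (2 * Real.pi) : ℝ) : ℂ) := by
        push_cast
        push_cast at hn
        linear_combination hn
      have h7 := mul_left_cancel₀ Complex.I_ne_zero h6
      exact_mod_cast h7
    have hx4 : (2 * Real.pi) * (2 * (T : ℝ) * (E j - E i)) = (2 * Real.pi) * n := by
      rw [ht] at hreal
      linear_combination hreal
    have hx5 : 2 * (T : ℝ) * (E j - E i) = n :=
      mul_left_cancel₀ (by positivity) hx4
    have hEji : E j - E i = (n : ℝ) / (2 * T) := by
      rw [eq_div_iff (by positivity : (2 * (T : ℝ)) ≠ 0)]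
      linear_combination hx5
    have hratval : (((n : ℚ) / (2 * T) : ℚ) : ℝ) = E j - E i := by
      rw [hEji]; push_cast; ring
    rcases hBij with hiB | hjB
    · rcases hmem j with hjA | hjB
      · obtain ⟨m, hm⟩ := hArat j hjA
        have hEj : E j = (m : ℝ) / T := by
          rw [eq_div_iff hTne]; exact hm
        refine hBirr i hiB ⟨(m : ℚ) / T - (n : ℚ) / (2 * T), ?_⟩
        push_cast
        rw [hEj] at hEji
        linarith [hEji]
      · exact hBdiff i hiB j hjB hij ⟨-((n : ℚ) / (2 * T)), by push_cast; linarith [hEji]⟩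
    · rcases hmem i with hiA | hiB
      · obtain ⟨m, hm⟩ := hArat i hiA
        have hEi : E i = (m : ℝ) / T := by
          rw [eq_div_iff hTne]; exact hm
        refine hBirr j hjB ⟨(m : ℚ) / T + (n : ℚ) / (2 * T), ?_⟩
        push_cast
        rw [hEi] at hEji
        linarith [hEji]
      · exact hBdiff i hiB j hjB hij ⟨-((n : ℚ) / (2 * T)), by push_cast; linarith [hEji]⟩
  · -- backward direction
    intro hoff
    have hO'off : ∀ i j, i ≠ j → (i ∈ B ∨ j ∈ B) → O' i j = 0 := by
      intro i j h1 h2; rw [hO'entry]; exact hoff i j h1 h2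
    have hzr : z = ((∑ pr : Fin d × Fin d, Complex.normSq (O' pr.1 pr.2) / d : ℝ) : ℂ) := by
      rw [hzval]
      push_cast
      refine Finset.sum_congr rfl fun pr _ => ?_
      obtain ⟨i, j⟩ := pr
      by_cases hij : i = j
      · subst hij
        rw [hcdiag i, mul_one]
      · rcases hmem i with hiA | hiB
        · rcases hmem j with hjA | hjB
          · rw [hcA i hiA j hjA, mul_one]
          · rw [hO'off i j hij (Or.inr hjB)]; simp
        · rw [hO'off i j hij (Or.inl hiB)]; simp
    rw [hGz, hzr, Complex.norm_real, hqsum]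
    norm_num
end
end

section
/- If a d×d unitary V maps every free observable to a free observable (i.e., V O V* ∈ 𝒪_F for all O ∈ 𝒪_F), then its adjoint V* also maps every free observable to a free observable. -/
open Matrix Complex

noncomputable section

/-- An isometry mapping a compact set into itself is surjective on it. -/
lemma surjOn_of_isometry' {α : Type*} [MetricSpace α] {f : α → α} (hf : Isometry f)
    {s : Set α} (hs : IsCompact s) (hm : Set.MapsTo f s s) : Set.SurjOn f s s := by
  intro x hx
  have hclosed : IsClosed (f '' s) := (hs.image hf.continuous).isClosed
  rw [← hclosed.closure_eq]
  rw [Metric.mem_closure_iff]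
  intro ε hε
  have hiter : ∀ n, f^[n] x ∈ s := fun n => hm.iterate n hx
  obtain ⟨a, -, φ, hφ, hconv⟩ := hs.tendsto_subseq hiter
  have hc : CauchySeq (fun n => f^[φ n] x) := hconv.cauchySeq
  rw [Metric.cauchySeq_iff] at hc
  obtain ⟨N, hN⟩ := hc ε hε
  have hlt : φ N < φ (N + 1) := hφ (Nat.lt_succ_self N)
  set k := φ (N + 1) - φ N with hk
  have hk1 : 1 ≤ k := by omega
  have hsum : φ (N + 1) = φ N + k := by omega
  have h1 : dist (f^[φ (N + 1)] x) (f^[φ N] x) < ε := hN _ (Nat.le_succ N) _ le_rfl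
  have hisoiter : ∀ n (u v : α), dist (f^[n] u) (f^[n] v) = dist u v := by
    intro n
    induction n with
    | zero => intro u v; simp
    | succ n ih =>
      intro u v
      rw [Function.iterate_succ_apply, Function.iterate_succ_apply, ih (f u) (f v),
        hf.dist_eq]
  have h2 : dist (f^[k] x) x < ε := by
    have h := h1
    rw [hsum, Function.iterate_add_apply, hisoiter (φ N) (f^[k] x) x] at h
    exact h
  refine ⟨f^[k] x, ?_, by rwa [dist_comm] at h2⟩
  obtain ⟨j, hj⟩ : ∃ j, k = j + 1 := ⟨k - 1, by omega⟩
  rw [hj, Function.iterate_succ_apply']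
  exact ⟨f^[j] x, hiter j, rfl⟩

lemma conj_unitary_eq {d : ℕ} (V M : Matrix (Fin d) (Fin d) ℂ) (hV : Vᴴ * V = 1) :
    (V * M * Vᴴ)ᴴ * (V * M * Vᴴ) = V * (Mᴴ * M) * Vᴴ := by
  simp only [conjTranspose_mul, conjTranspose_conjTranspose, Matrix.mul_assoc]
  rw [← Matrix.mul_assoc Vᴴ V, hV, Matrix.one_mul]

lemma trace_eq_sum_sq {d : ℕ} (M : Matrix (Fin d) (Fin d) ℂ) :
    (Mᴴ * M).trace = ((∑ p : Fin d × Fin d, ‖M p.1 p.2‖ ^ 2 : ℝ) : ℂ) := by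
  have hz : ∀ z : ℂ, (starRingEnd ℂ) z * z = ((‖z‖ ^ 2 : ℝ) : ℂ) := by
    intro z
    rw [mul_comm, Complex.mul_conj, Complex.sq_norm]
  simp only [Matrix.trace, Matrix.diag_apply, Matrix.mul_apply, Matrix.conjTranspose_apply,
    Complex.star_def, hz]
  rw [Fintype.sum_prod_type]
  push_cast
  exact Finset.sum_comm

lemma sum_sq_conj {d : ℕ} (V M : Matrix (Fin d) (Fin d) ℂ) (hV : Vᴴ * V = 1) :
    (∑ p : Fin d × Fin d, ‖(V * M * Vᴴ) p.1 p.2‖ ^ 2)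
      = ∑ p : Fin d × Fin d, ‖M p.1 p.2‖ ^ 2 := by
  have h := trace_eq_sum_sq (V * M * Vᴴ)
  rw [conj_unitary_eq V M hV, Matrix.trace_mul_cycle, ← Matrix.mul_assoc, hV,
    Matrix.one_mul, trace_eq_sum_sq M] at h
  exact_mod_cast h.symm

theorem adjoint_preserves_free_observables
    (d : ℕ) (hd : 2 ≤ d)
    (H : Matrix (Fin d) (Fin d) ℂ) (hH : H.IsHermitian)
    (ψ : Fin d → Fin d → ℂ) (E : Fin d → ℝ)
    (horth : ∀ i j : Fin d, star (ψ i) ⬝ᵥ ψ j = if i = j then 1 else 0)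
    (heig : ∀ i : Fin d, H *ᵥ ψ i = (E i : ℂ) • ψ i)
    (T : ℕ) (hT : 0 < T)
    (A B : Finset (Fin d))
    (hdisj : Disjoint A B) (hcover : A ∪ B = Finset.univ)
    (hArat : ∀ i ∈ A, ∃ m : ℤ, E i * (T : ℝ) = (m : ℝ))
    (hBirr : ∀ i ∈ B, Irrational (E i))
    (hBdiff : ∀ i ∈ B, ∀ j ∈ B, i ≠ j → Irrational (E i - E j))
    (hAcard : 1 < A.card) (hBcard : 1 < B.card)
    (V : Matrix (Fin d) (Fin d) ℂ) (hV : V ∈ Matrix.unitaryGroup (Fin d) ℂ)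
    (hmap : ∀ O : Matrix (Fin d) (Fin d) ℂ, IsFreeObs H T O → IsFreeObs H T (V * O * Vᴴ)) :
    ∀ O : Matrix (Fin d) (Fin d) ℂ, IsFreeObs H T O → IsFreeObs H T (Vᴴ * O * V) := by

  classical
  have hV1 : Vᴴ * V = 1 := by
    rw [← Matrix.star_eq_conjTranspose]
    exact Matrix.mem_unitaryGroup_iff'.mp hV
  set S : Set (Matrix (Fin d) (Fin d) ℂ) := {M | IsFreeObs H T M} with hSdef
  let e : Matrix (Fin d) (Fin d) ℂ → EuclideanSpace ℂ (Fin d × Fin d) := fun M => WithLp.toLp 2 (fun p => M p.1 p.2)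
  let e' : EuclideanSpace ℂ (Fin d × Fin d) → Matrix (Fin d) (Fin d) ℂ :=
    fun x => Matrix.of fun i j => x (i, j)
  let f : EuclideanSpace ℂ (Fin d × Fin d) → EuclideanSpace ℂ (Fin d × Fin d) :=
    fun x => e (V * e' x * Vᴴ)
  -- f is an isometry
  have hiso : Isometry f := by
    refine Isometry.of_dist_eq fun x y => ?_
    rw [EuclideanSpace.dist_eq, EuclideanSpace.dist_eq]
    congr 1
    symm
    have hsub : ∀ p : Fin d × Fin d, f x p - f y p = (V * (e' x - e' y) * Vᴴ) p.1 p.2 := by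
      intro p
      show (V * e' x * Vᴴ) p.1 p.2 - (V * e' y * Vᴴ) p.1 p.2 = _
      rw [Matrix.mul_sub, Matrix.sub_mul, Matrix.sub_apply]
    calc ∑ p : Fin d × Fin d, dist (x p) (y p) ^ 2
        = ∑ p : Fin d × Fin d, ‖(e' x - e' y) p.1 p.2‖ ^ 2 := by
          refine Finset.sum_congr rfl fun p _ => ?_
          rw [Complex.dist_eq]
          rfl
      _ = ∑ p : Fin d × Fin d, ‖(V * (e' x - e' y) * Vᴴ) p.1 p.2‖ ^ 2 :=
          (sum_sq_conj V _ hV1).symm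
      _ = ∑ p : Fin d × Fin d, dist (f x p) (f y p) ^ 2 := by
          refine Finset.sum_congr rfl fun p _ => ?_
          rw [Complex.dist_eq, hsub p]
  -- S is closed
  have hSclosed : IsClosed S := by
    have h1 : IsClosed {M : Matrix (Fin d) (Fin d) ℂ | Mᴴ = M} :=
      isClosed_eq (Continuous.matrix_conjTranspose continuous_id) continuous_id
    have hc2 : Continuous fun M : Matrix (Fin d) (Fin d) ℂ => hsInner M M := by
      show Continuous fun M : Matrix (Fin d) (Fin d) ℂ => (Mᴴ * M).trace / (d : ℂ)
      exact (((Continuous.matrix_conjTranspose continuous_id).matrix_mul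
        continuous_id).matrix_trace).div_const _
    have h2 : IsClosed {M : Matrix (Fin d) (Fin d) ℂ | hsInner M M = 1} :=
      isClosed_eq hc2 continuous_const
    have hc3 : Continuous fun M : Matrix (Fin d) (Fin d) ℂ => Gcorr H T M := by
      have hHc : Continuous fun M : Matrix (Fin d) (Fin d) ℂ => hsInner (Heis H T M) M := by
        show Continuous fun M : Matrix (Fin d) (Fin d) ℂ =>
          (((Uevol H (2 * Real.pi * T))ᴴ * M * Uevol H (2 * Real.pi * T))ᴴ * M).trace / (d : ℂ)
        exact ((((continuous_const.matrix_mul continuous_id).matrix_mul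
          continuous_const).matrix_conjTranspose.matrix_mul continuous_id).matrix_trace).div_const _
      exact (continuous_norm.comp hHc).pow 2
    have h3 : IsClosed {M : Matrix (Fin d) (Fin d) ℂ | Gcorr H T M = 1} :=
      isClosed_eq hc3 continuous_const
    have hrw : S = {M : Matrix (Fin d) (Fin d) ℂ | Mᴴ = M} ∩
        ({M | hsInner M M = 1} ∩ {M | Gcorr H T M = 1}) := by
      ext M
      exact ⟨fun h => ⟨h.1, h.2.1, h.2.2⟩, fun h => ⟨h.1, h.2.1, h.2.2⟩⟩
    rw [hrw]
    exact h1.inter (h2.inter h3)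
  -- e '' S is compact
  have hnorm : ∀ M ∈ S, (∑ p : Fin d × Fin d, ‖M p.1 p.2‖ ^ 2) = (d : ℝ) := by
    intro M hM
    have hd0 : (d : ℂ) ≠ 0 := by
      have : d ≠ 0 := by omega
      exact_mod_cast this
    have h1 : (Mᴴ * M).trace = (d : ℂ) := by
      have h := hM.2.1
      rw [hsInner, div_eq_one_iff_eq hd0] at h
      exact h
    rw [trace_eq_sum_sq] at h1
    exact_mod_cast h1
  have hS'closed : IsClosed (e '' S) := by
    have himg : e '' S = e' ⁻¹' S := by
      ext x
      constructor
      · rintro ⟨M, hM, rfl⟩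
        exact hM
      · intro hx
        exact ⟨e' x, hx, rfl⟩
    rw [himg]
    have he'cont : Continuous e' := by
      apply continuous_matrix
      intro i j
      exact (EuclideanSpace.proj ((i, j) : Fin d × Fin d)).continuous
    exact hSclosed.preimage he'cont
  have hS'bdd : Bornology.IsBounded (e '' S) := by
    apply Bornology.IsBounded.subset (Metric.isBounded_closedBall (x := 0) (r := Real.sqrt d))
    rintro x ⟨M, hM, rfl⟩
    rw [Metric.mem_closedBall, dist_zero_right, EuclideanSpace.norm_eq]
    have : ∀ p : Fin d × Fin d, ‖e M p‖ = ‖M p.1 p.2‖ := fun p => rfl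
    simp only [this]
    rw [hnorm M hM]
  have hS'compact : IsCompact (e '' S) := Metric.isCompact_of_isClosed_isBounded hS'closed hS'bdd
  have hmaps : Set.MapsTo f (e '' S) (e '' S) := by
    rintro x ⟨M, hM, rfl⟩
    exact ⟨V * M * Vᴴ, hmap M hM, rfl⟩
  intro O hO
  obtain ⟨y, ⟨M, hM, rfl⟩, hfy⟩ := surjOn_of_isometry' hiso hS'compact hmaps ⟨O, hO, rfl⟩
  have hMO : V * M * Vᴴ = O := by
    have h := congrArg e' hfy
    exact h
  have hfin : Vᴴ * O * V = M := by
    rw [← hMO, show Vᴴ * (V * M * Vᴴ) * V = Vᴴ * V * M * (Vᴴ * V) from by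
      simp only [Matrix.mul_assoc], hV1, Matrix.one_mul, Matrix.mul_one]
  rw [hfin]
  exact hM
end
end

section
/- Let d = 2^n and let O₁ be an n-qubit Pauli operator. Then the out-of-time-ordered correlator OTOC(O₁, O₁; U(2πT)) = (1/d)·tr(U(2πT)*O₁U(2πT)·O₁·U(2πT)*O₁U(2πT)·O₁) is a real number satisfying 1 − 2·𝒢(O₁) ≤ OTOC(O₁, O₁; U(2πT)) ≤ 1. -/
open Matrix Complex

noncomputable section

/-- Observable non-revival monotone `𝒢(O) = sup over free unitaries V of (1 - G(V* O V))`. -/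
def Gmono {d : ℕ} (H : Matrix (Fin d) (Fin d) ℂ) (T : ℕ)
    (O : Matrix (Fin d) (Fin d) ℂ) : ℝ :=
  ⨆ V : {V : Matrix (Fin d) (Fin d) ℂ // IsFreeUnitary H T V},
    (1 - Gcorr H T (V.1ᴴ * O * V.1))

/-- The four 1-qubit Pauli matrices `I₂, σx, σy, σz`. -/
def pauliMat : Fin 4 → Matrix (Fin 2) (Fin 2) ℂ :=
  ![1, !![0, 1; 1, 0], !![0, -Complex.I; Complex.I, 0], !![1, 0; 0, -1]]

/-- The n-fold Kronecker product `P₁ ⊗ ⋯ ⊗ Pₙ` of 2×2 matrices, as a `2^n × 2^n` matrix. -/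
def pauliString {n : ℕ} (P : Fin n → Matrix (Fin 2) (Fin 2) ℂ) :
    Matrix (Fin (2 ^ n)) (Fin (2 ^ n)) ℂ :=
  Matrix.of fun x y =>
    ∏ k : Fin n, P k (finFunctionFinEquiv.symm x k) (finFunctionFinEquiv.symm y k)

/-- An n-qubit Pauli operator: a Kronecker product of 1-qubit Pauli matrices. -/
def IsPauli {n : ℕ} (O : Matrix (Fin (2 ^ n)) (Fin (2 ^ n)) ℂ) : Prop :=
  ∃ P : Fin n → Matrix (Fin 2) (Fin 2) ℂ,
    (∀ k, ∃ a : Fin 4, P k = pauliMat a) ∧ O = pauliString P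


/-! ### Auxiliary lemmas -/

lemma pauliMat_herm (a : Fin 4) : (pauliMat a)ᴴ = pauliMat a := by
  fin_cases a <;>
    · ext i j
      fin_cases i <;> fin_cases j <;>
        simp [pauliMat, Matrix.conjTranspose_apply, Matrix.one_apply]

lemma pauliMat_sq (a : Fin 4) : pauliMat a * pauliMat a = 1 := by
  fin_cases a <;>
    simp [pauliMat, Matrix.mul_fin_two, Matrix.one_fin_two, Complex.I_mul_I]

lemma pauliString_mul {n : ℕ} (P Q : Fin n → Matrix (Fin 2) (Fin 2) ℂ) :
    pauliString P * pauliString Q = pauliString (fun k => P k * Q k) := by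
  ext x y
  rw [Matrix.mul_apply]
  rw [← Equiv.sum_comp (finFunctionFinEquiv (m := 2) (n := n))]
  simp only [pauliString, Matrix.of_apply, Equiv.symm_apply_apply, Matrix.mul_apply]
  rw [Fintype.prod_sum fun k a =>
    P k (finFunctionFinEquiv.symm x k) a * Q k a (finFunctionFinEquiv.symm y k)]
  congr 1
  ext f
  rw [← Finset.prod_mul_distrib]

lemma pauliString_one {n : ℕ} :
    pauliString (fun _ : Fin n => (1 : Matrix (Fin 2) (Fin 2) ℂ)) = 1 := by
  ext x y
  simp only [pauliString, Matrix.of_apply, Matrix.one_apply]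
  by_cases h : x = y
  · subst h; simp
  · have : ∃ k, (finFunctionFinEquiv.symm x) k ≠ (finFunctionFinEquiv.symm y) k := by
      by_contra hc
      push_neg at hc
      exact h (finFunctionFinEquiv.symm.injective (funext hc))
    obtain ⟨k, hk⟩ := this
    rw [if_neg h]
    exact Finset.prod_eq_zero (Finset.mem_univ k) (by simp [Matrix.one_apply, hk])

lemma pauliString_conjTranspose {n : ℕ} (P : Fin n → Matrix (Fin 2) (Fin 2) ℂ) :
    (pauliString P)ᴴ = pauliString (fun k => (P k)ᴴ) := by
  ext x y
  simp [pauliString, Matrix.conjTranspose_apply, map_prod]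

lemma Uevol_unitary {d : ℕ} (H : Matrix (Fin d) (Fin d) ℂ) (hH : H.IsHermitian) (t : ℝ) :
    (Uevol H t)ᴴ * Uevol H t = 1 ∧ Uevol H t * (Uevol H t)ᴴ = 1 := by
  set A : Matrix (Fin d) (Fin d) ℂ := (-(Complex.I * (t : ℂ))) • H with hA
  have hAH : Aᴴ = -A := by
    rw [hA, Matrix.conjTranspose_smul, hH.eq, ← neg_smul]
    congr 1
    simp [Complex.ext_iff]
  have hUH : (Uevol H t)ᴴ = NormedSpace.exp (-A) := by
    rw [Uevol, ← hA, ← Matrix.exp_conjTranspose, hAH]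
  have h1 : NormedSpace.exp (-A) * NormedSpace.exp A = 1 := by
    rw [← Matrix.exp_add_of_commute _ _ ((Commute.refl A).neg_left), neg_add_cancel,
      NormedSpace.exp_zero]
  have h2 : NormedSpace.exp A * NormedSpace.exp (-A) = 1 := by
    rw [← Matrix.exp_add_of_commute _ _ ((Commute.refl A).neg_right), add_neg_cancel,
      NormedSpace.exp_zero]
  exact ⟨by rw [hUH, Uevol, ← hA]; exact h1, by rw [hUH, Uevol, ← hA]; exact h2⟩

lemma unitary_diag_abs_le {d : ℕ} (V : Matrix (Fin d) (Fin d) ℂ)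
    (h : Vᴴ * V = 1) (i : Fin d) : ‖V i i‖ ≤ 1 := by
  have h1 : (Vᴴ * V) i i = 1 := by rw [h]; simp [Matrix.one_apply]
  rw [Matrix.mul_apply] at h1
  simp only [Matrix.conjTranspose_apply] at h1
  have h2 : ∑ k, (Complex.normSq (V k i) : ℂ) = 1 := by
    rw [← h1]; congr 1; ext k; rw [Complex.normSq_eq_conj_mul_self]; rfl
  have h3 : ∑ k, Complex.normSq (V k i) = 1 := by
    have := congrArg Complex.re h2
    simpa using this
  have h4 : Complex.normSq (V i i) ≤ 1 := by
    rw [← h3]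
    exact Finset.single_le_sum (f := fun k => Complex.normSq (V k i))
      (fun k _ => Complex.normSq_nonneg _) (Finset.mem_univ i)
  have := Complex.sq_norm (V i i)
  nlinarith [norm_nonneg (V i i)]

lemma mul_unitary {d : ℕ} (A B : Matrix (Fin d) (Fin d) ℂ)
    (hA : Aᴴ * A = 1) (hB : Bᴴ * B = 1) : (A * B)ᴴ * (A * B) = 1 := by
  rw [Matrix.conjTranspose_mul]
  calc Bᴴ * Aᴴ * (A * B) = Bᴴ * (Aᴴ * A * B) := by
        rw [Matrix.mul_assoc, Matrix.mul_assoc]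
    _ = Bᴴ * B := by rw [hA, Matrix.one_mul]
    _ = 1 := hB

lemma trace_re_le_of_unitary {d : ℕ} (V : Matrix (Fin d) (Fin d) ℂ)
    (h : Vᴴ * V = 1) : (V.trace).re ≤ d := by
  have h1 : (V.trace).re = ∑ i, (V i i).re := by
    simp [Matrix.trace, Matrix.diag, Complex.re_sum]
  rw [h1]
  calc ∑ i, (V i i).re ≤ ∑ i : Fin d, (1 : ℝ) := by
        refine Finset.sum_le_sum fun i _ => ?_
        exact le_trans (Complex.re_le_norm _) (unitary_diag_abs_le V h i)
    _ = d := by simp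

theorem otoc_bounded_by_observable_monotone
    (n : ℕ) (hn : 1 ≤ n)
    (H : Matrix (Fin (2 ^ n)) (Fin (2 ^ n)) ℂ) (hH : H.IsHermitian)
    (ψ : Fin (2 ^ n) → Fin (2 ^ n) → ℂ) (E : Fin (2 ^ n) → ℝ)
    (horth : ∀ i j : Fin (2 ^ n), star (ψ i) ⬝ᵥ ψ j = if i = j then 1 else 0)
    (heig : ∀ i : Fin (2 ^ n), H *ᵥ ψ i = (E i : ℂ) • ψ i)
    (T : ℕ) (hT : 0 < T)
    (A B : Finset (Fin (2 ^ n)))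
    (hdisj : Disjoint A B) (hcover : A ∪ B = Finset.univ)
    (hArat : ∀ i ∈ A, ∃ m : ℤ, E i * (T : ℝ) = (m : ℝ))
    (hBirr : ∀ i ∈ B, Irrational (E i))
    (hBdiff : ∀ i ∈ B, ∀ j ∈ B, i ≠ j → Irrational (E i - E j))
    (hAcard : 1 < A.card) (hBcard : 1 < B.card)
    (O₁ : Matrix (Fin (2 ^ n)) (Fin (2 ^ n)) ℂ) (hO₁ : IsPauli O₁) :
    ((Heis H T O₁ * O₁ * Heis H T O₁ * O₁).trace / ((2 ^ n : ℕ) : ℂ)).im = 0 ∧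
    1 - 2 * Gmono H T O₁ ≤
      ((Heis H T O₁ * O₁ * Heis H T O₁ * O₁).trace / ((2 ^ n : ℕ) : ℂ)).re ∧
    ((Heis H T O₁ * O₁ * Heis H T O₁ * O₁).trace / ((2 ^ n : ℕ) : ℂ)).re ≤ 1 := by
  classical
  obtain ⟨P, hP, hOP⟩ := hO₁
  -- Pauli facts
  have hOH : O₁ᴴ = O₁ := by
    rw [hOP, pauliString_conjTranspose]
    have hPH : (fun k => (P k)ᴴ) = P := by
      funext k
      obtain ⟨a, ha⟩ := hP k
      rw [ha, pauliMat_herm]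
    rw [hPH]
  have hO2 : O₁ * O₁ = 1 := by
    rw [hOP, pauliString_mul]
    have hPP : (fun k => P k * P k) = fun _ : Fin n => (1 : Matrix (Fin 2) (Fin 2) ℂ) := by
      funext k
      obtain ⟨a, ha⟩ := hP k
      rw [ha, pauliMat_sq]
    rw [hPP, pauliString_one]
  set U : Matrix (Fin (2 ^ n)) (Fin (2 ^ n)) ℂ := Uevol H (2 * Real.pi * T) with hUdef
  obtain ⟨hU1, hU2⟩ := Uevol_unitary H hH (2 * Real.pi * T)
  set W : Matrix (Fin (2 ^ n)) (Fin (2 ^ n)) ℂ := Heis H T O₁ with hWdef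
  have hWeq : W = Uᴴ * O₁ * U := rfl
  have hWH : Wᴴ = W := by
    rw [hWeq]
    simp only [Matrix.conjTranspose_mul, Matrix.conjTranspose_conjTranspose, hOH]
    rw [Matrix.mul_assoc]
  have hWW : W * W = 1 := by
    rw [hWeq]
    calc Uᴴ * O₁ * U * (Uᴴ * O₁ * U)
        = Uᴴ * O₁ * (U * Uᴴ) * O₁ * U := by
          simp only [Matrix.mul_assoc]
      _ = Uᴴ * (O₁ * O₁) * U := by
          rw [hU2]
          simp only [Matrix.mul_one, Matrix.mul_assoc]
      _ = 1 := by rw [hO2, Matrix.mul_one, hU1]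
  have hOu : O₁ᴴ * O₁ = 1 := by rw [hOH]; exact hO2
  have hWu : Wᴴ * W = 1 := by rw [hWH]; exact hWW
  set τ : ℂ := (W * O₁ * W * O₁).trace with hτ
  -- τ is real
  have hct : (W * O₁ * W * O₁)ᴴ = O₁ * (W * (O₁ * W)) := by
    simp only [Matrix.conjTranspose_mul, hOH, hWH, Matrix.mul_assoc]
  have hstar : star τ = τ := by
    rw [hτ, ← Matrix.trace_conjTranspose, hct, Matrix.trace_mul_comm]
    simp only [← Matrix.mul_assoc]
  have him : τ.im = 0 := Complex.conj_eq_iff_im.mp hstar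
  -- upper bound for τ.re
  have hVu : (W * O₁ * W * O₁)ᴴ * (W * O₁ * W * O₁) = 1 :=
    mul_unitary _ _ (mul_unitary _ _ (mul_unitary _ _ hWu hOu) hWu) hOu
  have hub : τ.re ≤ (2 ^ n : ℕ) := by
    simpa using trace_re_le_of_unitary _ hVu
  -- the matrix S and its properties
  set S : Matrix (Fin (2 ^ n)) (Fin (2 ^ n)) ℂ := W * O₁ + O₁ * W with hS
  have hSH : Sᴴ = S := by
    rw [hS, Matrix.conjTranspose_add, Matrix.conjTranspose_mul, Matrix.conjTranspose_mul,
      hOH, hWH, add_comm]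
  -- trace of W*O₁ is real
  have htr1 : star ((W * O₁).trace) = (W * O₁).trace := by
    rw [← Matrix.trace_conjTranspose, Matrix.conjTranspose_mul, hOH, hWH,
      Matrix.trace_mul_comm]
  set t : ℝ := ((W * O₁).trace).re with ht
  have htre : (W * O₁).trace = (t : ℂ) := by
    have h0 : ((W * O₁).trace).im = 0 := Complex.conj_eq_iff_im.mp htr1
    exact Complex.ext rfl (by simp [h0])
  have htrS : S.trace = ((2 * t : ℝ) : ℂ) := by
    rw [hS, Matrix.trace_add, Matrix.trace_mul_comm O₁ W, htre]
    push_cast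
    ring
  -- trace of S * S
  have hWOOW : W * O₁ * (O₁ * W) = 1 := by
    calc W * O₁ * (O₁ * W) = W * (O₁ * O₁) * W := by simp only [Matrix.mul_assoc]
      _ = 1 := by rw [hO2, Matrix.mul_one, hWW]
  have hOWWO : O₁ * W * (W * O₁) = 1 := by
    calc O₁ * W * (W * O₁) = O₁ * (W * W) * O₁ := by simp only [Matrix.mul_assoc]
      _ = 1 := by rw [hWW, Matrix.mul_one, hO2]
  have htrOWOW : (O₁ * W * (O₁ * W)).trace = τ := by
    have : (O₁ * W * (O₁ * W)).trace = ((W * O₁ * W * O₁)ᴴ).trace := by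
      rw [hct]; simp only [← Matrix.mul_assoc]
    rw [this, Matrix.trace_conjTranspose, hstar]
  have htrSS : (S * S).trace = 2 * τ + 2 * ((2 ^ n : ℕ) : ℂ) := by
    rw [hS]
    rw [Matrix.add_mul, Matrix.mul_add, Matrix.mul_add, Matrix.trace_add, Matrix.trace_add,
      Matrix.trace_add]
    rw [hWOOW, hOWWO, htrOWOW]
    have e1 : (W * O₁ * (W * O₁)).trace = τ := by
      rw [hτ]; simp only [← Matrix.mul_assoc]
    rw [e1]
    simp [Matrix.trace_one]
    ring
  -- entrywise formula for trace (S*S)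
  have hSS_re : ((S * S).trace).re = ∑ i, ∑ j, Complex.normSq (S i j) := by
    have e : (S * S).trace = ∑ i, ∑ j, (Complex.normSq (S i j) : ℂ) := by
      rw [Matrix.trace]
      congr 1
      funext i
      rw [Matrix.diag, Matrix.mul_apply]
      congr 1
      funext j
      have hji : S j i = star (S i j) := by
        have h := congrFun (congrFun hSH j) i
        simpa [Matrix.conjTranspose_apply] using h.symm
      rw [hji, Complex.star_def, Complex.mul_conj]
    rw [e]
    simp [Complex.re_sum]
  -- diagonal entries of S are real
  have hSdiag : ∀ i, Complex.normSq (S i i) = ((S i i).re) ^ 2 := by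
    intro i
    have hss : star (S i i) = S i i := by
      have h := congrFun (congrFun hSH i) i
      simpa [Matrix.conjTranspose_apply] using h
    have him0 : (S i i).im = 0 := Complex.conj_eq_iff_im.mp hss
    rw [Complex.normSq_apply, him0]
    ring
  have htrS_re : (S.trace).re = ∑ i, (S i i).re := by
    simp [Matrix.trace, Matrix.diag, Complex.re_sum]
  -- Cauchy–Schwarz on the diagonal
  have hcs : (∑ i, (S i i).re) ^ 2 ≤ (2 ^ n : ℕ) * ∑ i, ((S i i).re) ^ 2 := by
    simpa using sq_sum_le_card_mul_sum_sq
      (s := (Finset.univ : Finset (Fin (2 ^ n)))) (f := fun i => (S i i).re)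
  have hdiag_le : ∑ i, ((S i i).re) ^ 2 ≤ ∑ i, ∑ j, Complex.normSq (S i j) := by
    refine Finset.sum_le_sum fun i _ => ?_
    rw [← hSdiag i]
    exact Finset.single_le_sum (f := fun j => Complex.normSq (S i j))
      (fun j _ => Complex.normSq_nonneg _) (Finset.mem_univ i)
  set D : ℝ := ((2 ^ n : ℕ) : ℝ) with hD
  have hDpos : 0 < D := by positivity
  have hSSre : ((S * S).trace).re = 2 * τ.re + 2 * D := by
    rw [htrSS]
    simp only [Complex.add_re, Complex.mul_re, Complex.natCast_re, Complex.natCast_im,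
      Complex.re_ofNat, Complex.im_ofNat, hD]
    ring
  have hsum_diag : ∑ i, (S i i).re = 2 * t := by
    have := congrArg Complex.re htrS
    rw [htrS_re] at this
    simpa using this
  -- combine: (2t)^2 ≤ D * (2 τ.re + 2 D)
  have hkey : (2 * t) ^ 2 ≤ D * (2 * τ.re + 2 * D) := by
    calc (2 * t) ^ 2 = (∑ i, (S i i).re) ^ 2 := by rw [hsum_diag]
      _ ≤ (2 ^ n : ℕ) * ∑ i, ((S i i).re) ^ 2 := hcs
      _ ≤ D * ∑ i, ∑ j, Complex.normSq (S i j) := by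
          rw [hD]
          exact mul_le_mul_of_nonneg_left hdiag_le (by positivity)
      _ = D * ((S * S).trace).re := by rw [hSS_re]
      _ = D * (2 * τ.re + 2 * D) := by rw [hSSre]
  -- Gcorr of O₁
  have hGc : Gcorr H T O₁ = t ^ 2 / D ^ 2 := by
    rw [Gcorr, hsInner, ← hWdef, hWH, htre]
    rw [norm_div]
    simp only [Complex.norm_real, Real.norm_eq_abs, Complex.norm_natCast]
    rw [div_pow, ← hD, _root_.sq_abs]
  -- the identity is a free unitary
  have hfree1 : IsFreeUnitary H T (1 : Matrix (Fin (2 ^ n)) (Fin (2 ^ n)) ℂ) := by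
    constructor
    · exact one_mem _
    · intro x hx
      simpa [Matrix.one_mulVec] using hx
  have hGnonneg : ∀ V : Matrix (Fin (2 ^ n)) (Fin (2 ^ n)) ℂ, 0 ≤ Gcorr H T V := by
    intro V
    rw [Gcorr]
    exact sq_nonneg _
  have hbdd : BddAbove (Set.range fun V : {V : Matrix (Fin (2 ^ n)) (Fin (2 ^ n)) ℂ //
      IsFreeUnitary H T V} => 1 - Gcorr H T (V.1ᴴ * O₁ * V.1)) := by
    refine ⟨1, ?_⟩
    rintro x ⟨V, rfl⟩
    have := hGnonneg (V.1ᴴ * O₁ * V.1)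
    show 1 - Gcorr H T (V.1ᴴ * O₁ * V.1) ≤ 1
    linarith
  have hGmono : 1 - Gcorr H T O₁ ≤ Gmono H T O₁ := by
    have h := le_ciSup hbdd (⟨1, hfree1⟩ : {V : Matrix (Fin (2 ^ n)) (Fin (2 ^ n)) ℂ //
      IsFreeUnitary H T V})
    simpa [Gmono, Matrix.conjTranspose_one] using h
  -- final assembly
  have hre_goal : ((W * O₁ * W * O₁).trace / ((2 ^ n : ℕ) : ℂ)).re = τ.re / D := by
    rw [← hτ, Complex.div_natCast_re, hD]
  have him_goal : ((W * O₁ * W * O₁).trace / ((2 ^ n : ℕ) : ℂ)).im = 0 := by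
    rw [← hτ, Complex.div_natCast_im, him, zero_div]
  refine ⟨him_goal, ?_, ?_⟩
  · rw [hre_goal]
    have h1 : 2 * (t ^ 2 / D ^ 2) - 1 ≤ τ.re / D := by
      have e1 : τ.re / D = (D * τ.re) / D ^ 2 := by
        field_simp
      have e2 : 2 * (t ^ 2 / D ^ 2) - 1 = (2 * t ^ 2 - D ^ 2) / D ^ 2 := by
        field_simp
      rw [e1, e2]
      apply div_le_div_of_nonneg_right ?_ (by positivity)
      nlinarith [hkey]
    have h2 : 1 - 2 * Gmono H T O₁ ≤ 1 - 2 * (1 - Gcorr H T O₁) := by linarith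
    rw [hGc] at h2
    linarith
  · rw [hre_goal]
    rw [div_le_one hDpos]
    simpa [hD] using hub
end
end

section
/- For every α ∈ ℝ, every d ≥ 1, and every d×d complex matrix ρ, with p = sin²(α) one has 𝒩(R_α · (ρ ⊗ f₀f₀*) · R_α*) = (1−p)·(ρ ⊗ f₀f₀*) + p·Σ_{j=1}^{d} (e_j e_j* · ρ · e_j e_j*) ⊗ (f_j f_j*). That is, the weak measurement channel of strength p acts as 𝓜_p(ρ) = (1−p)·ρ ⊗ |0⟩⟨0|_E + p·Σ_j |j⟩⟨j|ρ|j⟩⟨j| ⊗ |j⟩⟨j|_E. -/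
open Matrix Complex Kronecker

noncomputable section

/-- `X_j = f_j f_0* + f_0 f_j*` on `ℂ^{d+1}`, for `1 ≤ j ≤ d`. -/
def Xop (d : ℕ) (j : Fin d) : Matrix (Fin (d + 1)) (Fin (d + 1)) ℂ :=
  Matrix.single j.succ 0 1 + Matrix.single 0 j.succ 1

/-- Controlled rotation `R_α = Σ_j (e_j e_j*) ⊗ exp(-i α X_j)`. -/
def Rrot (d : ℕ) (α : ℝ) : Matrix (Fin d × Fin (d + 1)) (Fin d × Fin (d + 1)) ℂ :=
  ∑ j : Fin d,
    Matrix.single j j (1 : ℂ) ⊗ₖ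
      NormedSpace.exp ((-(Complex.I * (α : ℂ))) • Xop d j)

/-- Dephasing channel `𝒩(M) = Σ_i (I ⊗ f_i f_i*) M (I ⊗ f_i f_i*)`. -/
def dephase (d : ℕ) (M : Matrix (Fin d × Fin (d + 1)) (Fin d × Fin (d + 1)) ℂ) :
    Matrix (Fin d × Fin (d + 1)) (Fin d × Fin (d + 1)) ℂ :=
  ∑ i : Fin (d + 1),
    ((1 : Matrix (Fin d) (Fin d) ℂ) ⊗ₖ Matrix.single i i (1 : ℂ)) * M *
      ((1 : Matrix (Fin d) (Fin d) ℂ) ⊗ₖ Matrix.single i i (1 : ℂ))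


set_option maxHeartbeats 1000000 in

lemma exp_smul_idem {n : Type*} [Fintype n] [DecidableEq n]
    (c : ℂ) (Q : Matrix n n ℂ) (hQ : Q * Q = Q) :
    NormedSpace.exp (c • Q) = 1 + (Complex.exp c - 1) • Q := by
  letI : SeminormedRing (Matrix n n ℂ) := Matrix.linftyOpSemiNormedRing
  letI : NormedRing (Matrix n n ℂ) := Matrix.linftyOpNormedRing
  letI : NormedAlgebra ℂ (Matrix n n ℂ) := Matrix.linftyOpNormedAlgebra
  have hpow : ∀ k : ℕ, Q ^ (k + 1) = Q := by
    intro k; induction k with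
    | zero => simp
    | succ k ih => rw [pow_succ, ih, hQ]
  have hg : Summable (fun k : ℕ => ((k.factorial : ℂ)⁻¹ * c ^ k)) := by
    simpa [smul_eq_mul] using NormedSpace.expSeries_summable' (𝕂 := ℂ) (𝔸 := ℂ) c
  have hg1 : Summable (fun k : ℕ => (((k+1).factorial : ℂ)⁻¹ * c ^ (k+1))) :=
    (summable_nat_add_iff 1).mpr hg
  have hexpc : Complex.exp c = ∑' k : ℕ, ((k.factorial : ℂ)⁻¹ * c ^ k) := by
    rw [Complex.exp_eq_exp_ℂ, NormedSpace.exp_eq_tsum ℂ]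
    simp [smul_eq_mul]
  have htail : (∑' k : ℕ, (((k+1).factorial : ℂ)⁻¹ * c ^ (k+1))) = Complex.exp c - 1 := by
    rw [hexpc, hg.tsum_eq_zero_add]
    simp
  rw [NormedSpace.exp_eq_tsum ℂ]
  beta_reduce
  rw [Summable.tsum_eq_zero_add (by exact NormedSpace.expSeries_summable' (𝕂 := ℂ) (c • Q))]
  have : ∀ k : ℕ, (((k+1).factorial : ℂ)⁻¹) • (c • Q) ^ (k+1) = (((k+1).factorial : ℂ)⁻¹ * c ^ (k+1)) • Q := by
    intro k
    rw [smul_pow, hpow, smul_smul]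
  simp only [this, pow_zero]
  rw [hg1.tsum_smul_const, htail]
  simp

def Pj (d : ℕ) (j : Fin d) : Matrix (Fin (d + 1)) (Fin (d + 1)) ℂ :=
  Matrix.single 0 0 1 + Matrix.single j.succ j.succ 1

section prods
variable {d : ℕ} (j : Fin d)

lemma hXX : Xop d j * Xop d j = Pj d j := by
  have hs : (j.succ : Fin (d+1)) ≠ 0 := Fin.succ_ne_zero j
  simp [Xop, Pj, add_mul, mul_add, Matrix.single_mul_single_same,
    Matrix.single_mul_single_of_ne, hs, hs.symm, add_comm]

lemma hPX : Pj d j * Xop d j = Xop d j := by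
  have hs : (j.succ : Fin (d+1)) ≠ 0 := Fin.succ_ne_zero j
  simp [Xop, Pj, add_mul, mul_add, Matrix.single_mul_single_same,
    Matrix.single_mul_single_of_ne, hs, hs.symm, add_comm]

lemma hXP : Xop d j * Pj d j = Xop d j := by
  have hs : (j.succ : Fin (d+1)) ≠ 0 := Fin.succ_ne_zero j
  simp [Xop, Pj, add_mul, mul_add, Matrix.single_mul_single_same,
    Matrix.single_mul_single_of_ne, hs, hs.symm, add_comm]

lemma hPP : Pj d j * Pj d j = Pj d j := by
  have hs : (j.succ : Fin (d+1)) ≠ 0 := Fin.succ_ne_zero j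
  simp [Pj, add_mul, mul_add, Matrix.single_mul_single_same,
    Matrix.single_mul_single_of_ne, hs, hs.symm]

end prods

lemma expX (d : ℕ) (j : Fin d) (α : ℝ) :
    NormedSpace.exp ((-(Complex.I * (α : ℂ))) • Xop d j) =
      1 + ((Real.cos α : ℂ) - 1) • Pj d j + (-(Complex.I * (Real.sin α : ℂ))) • Xop d j := by
  have hxx := hXX j; have hpx := hPX j; have hxp := hXP j; have hpp := hPP j
  set X := Xop d j
  set P := Pj d j
  set c : ℂ := -(Complex.I * (α : ℂ)) with hc
  set Qp : Matrix (Fin (d+1)) (Fin (d+1)) ℂ := (2⁻¹ : ℂ) • (P + X) with hQp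
  set Qm : Matrix (Fin (d+1)) (Fin (d+1)) ℂ := (2⁻¹ : ℂ) • (P - X) with hQm
  have h2 : ((P + X) * (P + X)) = (2 : ℂ) • (P + X) := by
    rw [add_mul, mul_add, mul_add, hpp, hpx, hxp, hxx]; module
  have h2' : ((P - X) * (P - X)) = (2 : ℂ) • (P - X) := by
    rw [sub_mul, mul_sub, mul_sub, hpp, hpx, hxp, hxx]; module
  have hQpi : Qp * Qp = Qp := by
    rw [hQp, Matrix.smul_mul, Matrix.mul_smul, h2, smul_smul, smul_smul]; norm_num
  have hQmi : Qm * Qm = Qm := by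
    rw [hQm, Matrix.smul_mul, Matrix.mul_smul, h2', smul_smul, smul_smul]; norm_num
  have hpm : Qp * Qm = 0 := by
    rw [hQp, hQm, Matrix.smul_mul, Matrix.mul_smul, add_mul, mul_sub, mul_sub,
      hpp, hpx, hxp, hxx]
    simp
  have hmp : Qm * Qp = 0 := by
    rw [hQp, hQm, Matrix.smul_mul, Matrix.mul_smul, sub_mul, mul_add, mul_add,
      hpp, hpx, hxp, hxx]
    simp
    abel
  have hdecomp : c • X = c • Qp + (-c) • Qm := by rw [hQp, hQm]; module
  have hcomm : Commute (c • Qp) ((-c) • Qm) := by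
    simp only [Commute, SemiconjBy, Matrix.mul_smul, Matrix.smul_mul, hpm, hmp,
      smul_zero]
  rw [hdecomp, Matrix.exp_add_of_commute _ _ hcomm, exp_smul_idem _ _ hQpi,
    exp_smul_idem _ _ hQmi]
  have hab : (1 + (Complex.exp c - 1) • Qp) * (1 + (Complex.exp (-c) - 1) • Qm)
      = 1 + (Complex.exp c - 1) • Qp + (Complex.exp (-c) - 1) • Qm := by
    simp only [mul_add, add_mul, Matrix.smul_mul, Matrix.mul_smul, hpm, smul_zero,
      mul_one, one_mul, add_zero]
  rw [hab]
  have he1 : Complex.exp c = (Real.cos α : ℂ) - Complex.I * (Real.sin α : ℂ) := by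
    rw [hc, show -(Complex.I * (α : ℂ)) = (-α : ℂ) * Complex.I by ring,
      Complex.exp_mul_I, Complex.cos_neg, Complex.sin_neg,
      ← Complex.ofReal_cos, ← Complex.ofReal_sin]
    ring
  have he2 : Complex.exp (-c) = (Real.cos α : ℂ) + Complex.I * (Real.sin α : ℂ) := by
    rw [hc, show -(-(Complex.I * (α : ℂ))) = (α : ℂ) * Complex.I by ring,
      Complex.exp_mul_I, ← Complex.ofReal_cos, ← Complex.ofReal_sin]
    ring
  rw [he1, he2, hQp, hQm]
  module

section helpers
variable {d : ℕ}

lemma sum_std_one : (∑ j : Fin d, Matrix.single j j (1 : ℂ)) = 1 := by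
  ext a b
  rcases eq_or_ne a b with rfl | h
  · simp [Matrix.sum_apply, Matrix.single, Matrix.one_apply, Finset.sum_ite_eq]
  · simp [Matrix.sum_apply, Matrix.single, Matrix.one_apply, h]

lemma sum_kron {ι : Type*} (s : Finset ι) (A : ι → Matrix (Fin d) (Fin d) ℂ)
    (B : Matrix (Fin (d+1)) (Fin (d+1)) ℂ) :
    (∑ i ∈ s, A i) ⊗ₖ B = ∑ i ∈ s, (A i ⊗ₖ B) := by
  ext ⟨a, b⟩ ⟨a', b'⟩
  simp [Matrix.kroneckerMap_apply, Matrix.sum_apply, Finset.sum_mul]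

lemma kron_sum {ι : Type*} (s : Finset ι) (A : Matrix (Fin d) (Fin d) ℂ)
    (B : ι → Matrix (Fin (d+1)) (Fin (d+1)) ℂ) :
    ∑ i ∈ s, (A ⊗ₖ B i) = A ⊗ₖ (∑ i ∈ s, B i) := by
  ext ⟨a, b⟩ ⟨a', b'⟩
  simp [Matrix.kroneckerMap_apply, Matrix.sum_apply, Finset.mul_sum]

lemma kron_conjT (A : Matrix (Fin d) (Fin d) ℂ) (B : Matrix (Fin (d+1)) (Fin (d+1)) ℂ) :
    (A ⊗ₖ B)ᴴ = Aᴴ ⊗ₖ Bᴴ := by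
  ext ⟨a, b⟩ ⟨a', b'⟩
  simp [Matrix.conjTranspose_apply, Matrix.kroneckerMap_apply, star_mul']

lemma stdBasis_conjT {n : Type*} [DecidableEq n] (i j : n) :
    (Matrix.single i j (1 : ℂ))ᴴ = Matrix.single j i 1 := by
  ext a b
  simp only [Matrix.conjTranspose_apply, Matrix.single, Matrix.of_apply]
  split_ifs with h1 h2 h2 <;> simp_all

lemma deph1_single (a b : Fin (d+1)) (z : ℂ) :
    (∑ i : Fin (d+1), Matrix.single i i (1 : ℂ) * Matrix.single a b z *
        Matrix.single i i 1)
      = if a = b then Matrix.single a b z else 0 := by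
  have h1 : ∀ i : Fin (d+1), Matrix.single i i (1 : ℂ) * Matrix.single a b z
      = if i = a then Matrix.single a b z else 0 := by
    intro i; rcases eq_or_ne i a with rfl | h
    · simp
    · simp [h]
  have h2 : ∀ i : Fin (d+1), Matrix.single a b z * Matrix.single i i (1 : ℂ)
      = if b = i then Matrix.single a b z else 0 := by
    intro i; rcases eq_or_ne b i with rfl | h
    · simp
    · simp [h]
  simp only [h1, ite_mul, zero_mul, h2]
  rw [Finset.sum_ite_eq' Finset.univ a]
  simp [eq_comm]

lemma dephase_sum {ι : Type*} (s : Finset ι)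
    (M : ι → Matrix (Fin d × Fin (d + 1)) (Fin d × Fin (d + 1)) ℂ) :
    dephase d (∑ i ∈ s, M i) = ∑ i ∈ s, dephase d (M i) := by
  simp only [dephase, Finset.mul_sum, Finset.sum_mul]
  rw [Finset.sum_comm]

lemma dephase_kron (A : Matrix (Fin d) (Fin d) ℂ) (B : Matrix (Fin (d+1)) (Fin (d+1)) ℂ) :
    dephase d (A ⊗ₖ B) =
      A ⊗ₖ (∑ i : Fin (d+1), Matrix.single i i (1 : ℂ) * B *
        Matrix.single i i 1) := by
  simp only [dephase, ← Matrix.mul_kronecker_mul, one_mul, mul_one, kron_sum]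

end helpers

theorem weak_measurement_channel_form
    (d : ℕ) (hd : 1 ≤ d) (α : ℝ) (ρ : Matrix (Fin d) (Fin d) ℂ) :
    dephase d (Rrot d α *
        (ρ ⊗ₖ Matrix.single (0 : Fin (d + 1)) (0 : Fin (d + 1)) (1 : ℂ)) *
        (Rrot d α)ᴴ) =
      ((1 - Real.sin α ^ 2 : ℝ) : ℂ) •
          (ρ ⊗ₖ Matrix.single (0 : Fin (d + 1)) (0 : Fin (d + 1)) (1 : ℂ)) +
        ((Real.sin α ^ 2 : ℝ) : ℂ) •
          ∑ j : Fin d,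
            (Matrix.single j j (1 : ℂ) * ρ * Matrix.single j j (1 : ℂ)) ⊗ₖ
              Matrix.single j.succ j.succ (1 : ℂ) := by
  set E00 : Matrix (Fin (d+1)) (Fin (d+1)) ℂ :=
    Matrix.single (0 : Fin (d + 1)) 0 (1 : ℂ) with hE00def
  let U : Fin d → Matrix (Fin (d+1)) (Fin (d+1)) ℂ :=
    fun j => NormedSpace.exp ((-(Complex.I * (α : ℂ))) • Xop d j)
  have hE : E00 * E00 = E00 := by simp [hE00def]
  have step1 : Rrot d α * (ρ ⊗ₖ E00) * (Rrot d α)ᴴ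
      = ∑ j : Fin d, ∑ k : Fin d,
          (Matrix.single j j (1 : ℂ) * ρ * Matrix.single k k 1) ⊗ₖ
            (U j * E00 * (U k)ᴴ) := by
    simp only [Rrot, Matrix.conjTranspose_sum, kron_conjT, stdBasis_conjT,
      Finset.sum_mul, Finset.mul_sum, ← Matrix.mul_kronecker_mul, U]
    rw [Finset.sum_comm]
  have hUE : ∀ j : Fin d,
      U j * E00 = ((Real.cos α : ℂ)) • E00
        + (-(Complex.I * (Real.sin α : ℂ))) • Matrix.single (Fin.succ j) 0 1 := by
    intro j
    show NormedSpace.exp ((-(Complex.I * (α : ℂ))) • Xop d j) * E00 = _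
    rw [expX d j α]
    have h1 : Pj d j * E00 = E00 := by
      simp [Pj, add_mul, hE00def, Fin.succ_ne_zero j]
    have h2 : Xop d j * E00 = Matrix.single (Fin.succ j) 0 1 := by
      simp [Xop, add_mul, hE00def, Fin.succ_ne_zero j]
    rw [add_mul, add_mul, one_mul, Matrix.smul_mul, Matrix.smul_mul, h1, h2]
    module
  have hc : star ((Real.cos α : ℂ)) = ((Real.cos α : ℂ)) := by
    simp only [RCLike.star_def, Complex.conj_ofReal]
  have hs : star (-(Complex.I * (Real.sin α : ℂ))) = Complex.I * (Real.sin α : ℂ) := by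
    simp only [star_neg, star_mul', RCLike.star_def, Complex.conj_I, Complex.conj_ofReal]
    ring
  have hW : ∀ j k : Fin d, U j * E00 * (U k)ᴴ
      = ((Real.cos α : ℂ) * (Real.cos α : ℂ)) • E00
        + ((Real.cos α : ℂ) * (Complex.I * (Real.sin α : ℂ))) •
            Matrix.single 0 (Fin.succ k) 1
        + ((-(Complex.I * (Real.sin α : ℂ))) * (Real.cos α : ℂ)) •
            Matrix.single (Fin.succ j) 0 1
        + ((-(Complex.I * (Real.sin α : ℂ))) * (Complex.I * (Real.sin α : ℂ))) •
            Matrix.single (Fin.succ j) (Fin.succ k) 1 := by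
    intro j k
    have hassoc : U j * E00 * (U k)ᴴ = (U j * E00) * (U k * E00)ᴴ := by
      conv_rhs => rw [Matrix.conjTranspose_mul, hE00def, stdBasis_conjT,
        ← Matrix.mul_assoc, Matrix.mul_assoc (U j), hE]
    rw [hassoc, hUE j, hUE k, Matrix.conjTranspose_add, Matrix.conjTranspose_smul,
      Matrix.conjTranspose_smul, hE00def, stdBasis_conjT, stdBasis_conjT, hc, hs]
    simp only [add_mul, mul_add, Matrix.smul_mul, Matrix.mul_smul, smul_smul,
      Matrix.single_mul_single_same, one_mul]
    module
  have hs2 : (-(Complex.I * (Real.sin α : ℂ))) * (Complex.I * (Real.sin α : ℂ))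
      = ((Real.sin α : ℂ)) ^ 2 := by
    linear_combination (-((Real.sin α : ℂ) ^ 2)) * Complex.I_mul_I
  have hD : ∀ j k : Fin d,
      (∑ i : Fin (d+1), Matrix.single i i (1 : ℂ) * (U j * E00 * (U k)ᴴ) *
          Matrix.single i i 1)
        = ((Real.cos α : ℂ) * (Real.cos α : ℂ)) • E00 + if j = k
            then ((Real.sin α : ℂ) ^ 2) • Matrix.single (Fin.succ j) (Fin.succ j) 1
            else 0 := by
    intro j k
    rw [hW j k]
    simp only [hW j k, Matrix.mul_add, Matrix.add_mul, Matrix.mul_smul, Matrix.smul_mul,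
      Finset.sum_add_distrib, ← Finset.smul_sum, deph1_single, hE00def, hs2]
    rw [if_neg (Ne.symm (Fin.succ_ne_zero k)), if_neg (Fin.succ_ne_zero j)]
    simp only [if_true, smul_zero, add_zero, Fin.succ_inj]
    rcases eq_or_ne j k with rfl | h
    · simp
    · simp [h]
  rw [step1, dephase_sum]
  simp only [dephase_sum, dephase_kron, hD]
  have kron_ite : ∀ (A : Matrix (Fin d) (Fin d) ℂ) (c : Prop) [Decidable c]
      (X : Matrix (Fin (d+1)) (Fin (d+1)) ℂ),
      A ⊗ₖ (if c then X else 0) = if c then A ⊗ₖ X else 0 := by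
    intro A c _ X; split_ifs <;> simp
  simp only [Matrix.kronecker_add, Matrix.kronecker_smul, kron_ite, Finset.sum_add_distrib,
    Finset.sum_ite_eq, Finset.mem_univ, if_true]
  have hsum1 : ∑ j : Fin d, ∑ k : Fin d,
      ((Real.cos α : ℂ) * (Real.cos α : ℂ)) •
        ((Matrix.single j j (1 : ℂ) * ρ * Matrix.single k k 1) ⊗ₖ E00)
      = ((Real.cos α : ℂ) * (Real.cos α : ℂ)) • (ρ ⊗ₖ E00) := by
    simp only [← Finset.smul_sum]
    congr 1
    calc ∑ j : Fin d, ∑ k : Fin d,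
          ((Matrix.single j j (1 : ℂ) * ρ * Matrix.single k k 1) ⊗ₖ E00)
        = ∑ j : Fin d, ((Matrix.single j j (1 : ℂ) * ρ) ⊗ₖ E00) := by
          refine Finset.sum_congr rfl fun j _ => ?_
          rw [← sum_kron, ← Finset.mul_sum, sum_std_one, mul_one]
      _ = ρ ⊗ₖ E00 := by
          rw [← sum_kron, ← Finset.sum_mul, sum_std_one, one_mul]
  rw [hsum1]
  have hc2 : (Real.cos α : ℂ) * (Real.cos α : ℂ) = ((1 - Real.sin α ^ 2 : ℝ) : ℂ) := by
    rw [← Real.cos_sq']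
    push_cast
    ring
  rw [hc2, ← Finset.smul_sum]
  congr 1
  congr 1
  push_cast
  ring
end
end
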